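/- arXiv:2304.03775 — 9 statements merged into one kernel-verified Lean document; each statement's English description precedes it below -/
import Mathlib

section
/- Let S be a countably infinite discrete set and k a kernel on S with k(X,X) = 1 and k(X,·) vanishing at infinity for all X. If k has discrete masses (δ_X ∈ H_k for all X), then the MMD metrizes convergence: for any probability distributions μ, ν_1, ν_2, … on S, if MMD_k(μ, ν_n) → 0 then ν_n(X) → μ(X) for every X ∈ S. In particular, |μ(X) − ν_n(X)| ≤ ‖δ_X‖_k · MMD_k(μ, ν_n). -/
open scoped RealInnerProductSpace Classical

/-- **Kernels with discrete masses metrize the space of distributions.**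
Let `k` be a kernel on a countably infinite set `S` with `k(X,X) = 1` and each section
`k(X,·)` vanishing at infinity, represented by a Hilbert space `H` and feature map `φ`
(`k X Y = ⟪φ X, φ Y⟫`, dense span), and suppose `k` has discrete masses.  If `μ` and
`ν_n` are probability distributions on `S` and `MMD_k(μ, ν_n) → 0` (the norm of the
difference of kernel mean embeddings tends to zero), then `ν_n(X) → μ(X)` for every
`X`; moreover `|μ(X) − ν_n(X)| ≤ ‖δ_X‖_k · MMD_k(μ, ν_n)`. -/
theorem discrete_masses_metrize_distributions
    {S : Type*} [Countable S] [Infinite S] (k : S → S → ℝ)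
    {H : Type*} [NormedAddCommGroup H] [InnerProductSpace ℝ H] [CompleteSpace H]
    (φ : S → H)
    (hrepr : ∀ X Y : S, ⟪φ X, φ Y⟫ = k X Y)
    (hdense : Dense (Submodule.span ℝ (Set.range φ) : Set H))
    (hnorm : ∀ X, k X X = 1)
    (hvanish : ∀ X, Filter.Tendsto (fun Y => k X Y) Filter.cofinite (nhds 0))
    (hmass : ∀ X : S, ∃ d : H, ∀ Y : S, ⟪d, φ Y⟫ = if Y = X then 1 else 0)
    (μ : S → ℝ) (ν : ℕ → S → ℝ)
    (hμ0 : ∀ X, 0 ≤ μ X) (hμ1 : ∑' X, μ X = 1)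
    (hν0 : ∀ n X, 0 ≤ ν n X) (hν1 : ∀ n, ∑' X, ν n X = 1)
    (hMMD : Filter.Tendsto
      (fun n => ‖(∑' X, μ X • φ X) - ∑' X, ν n X • φ X‖) Filter.atTop (nhds 0)) :
    (∀ X : S, Filter.Tendsto (fun n => ν n X) Filter.atTop (nhds (μ X))) ∧
    ∀ (X : S) (dX : H), (∀ Y : S, ⟪dX, φ Y⟫ = if Y = X then 1 else 0) →
      ∀ n, |μ X - ν n X| ≤ ‖dX‖ * ‖(∑' X, μ X • φ X) - ∑' X, ν n X • φ X‖ := by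

  have hφ : ∀ X : S, ‖φ X‖ = 1 := by
    intro X
    have : ‖φ X‖ ^ 2 = 1 := by
      rw [← real_inner_self_eq_norm_sq, hrepr, hnorm]
    nlinarith [norm_nonneg (φ X)]
  have hsum : ∀ (w : S → ℝ), (∀ X, 0 ≤ w X) → (∑' X, w X = 1) →
      Summable (fun X => w X • φ X) := by
    intro w hw0 hw1
    have hws : Summable w := by
      by_contra h
      rw [tsum_eq_zero_of_not_summable h] at hw1
      norm_num at hw1
    apply Summable.of_norm
    have : (fun X => ‖w X • φ X‖) = w := by
      funext X
      rw [norm_smul, hφ, mul_one, Real.norm_eq_abs, abs_of_nonneg (hw0 X)]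
    rw [this]; exact hws
  have hμs := hsum μ hμ0 hμ1
  have hνs : ∀ n, Summable (fun X => ν n X • φ X) := fun n => hsum (ν n) (hν0 n) (hν1 n)
  -- key: inner of dX with embedding
  have hkey : ∀ (X : S) (dX : H), (∀ Y : S, ⟪dX, φ Y⟫ = if Y = X then 1 else 0) →
      ∀ (w : S → ℝ), (∀ Y, 0 ≤ w Y) → (∑' Y, w Y = 1) →
      ⟪dX, ∑' Y, w Y • φ Y⟫ = w X := by
    intro X dX hd w hw0 hw1
    have hws := hsum w hw0 hw1
    have := (innerSL ℝ dX : H →L[ℝ] ℝ).map_tsum hws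
    simp only [innerSL_apply_apply] at this
    rw [this]
    have : (fun Y => ⟪dX, w Y • φ Y⟫) = fun Y => if Y = X then w X else 0 := by
      funext Y
      rw [real_inner_smul_right, hd Y]
      split
      · next h => subst h; simp
      · simp
    rw [this]
    exact tsum_ite_eq X (fun _ => w X)
  have hineq : ∀ (X : S) (dX : H), (∀ Y : S, ⟪dX, φ Y⟫ = if Y = X then 1 else 0) →
      ∀ n, |μ X - ν n X| ≤ ‖dX‖ * ‖(∑' Y, μ Y • φ Y) - ∑' Y, ν n Y • φ Y‖ := by
    intro X dX hd n
    have h1 : ⟪dX, (∑' Y, μ Y • φ Y) - ∑' Y, ν n Y • φ Y⟫ = μ X - ν n X := by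
      rw [inner_sub_right, hkey X dX hd μ hμ0 hμ1, hkey X dX hd (ν n) (hν0 n) (hν1 n)]
    calc |μ X - ν n X| = |⟪dX, (∑' Y, μ Y • φ Y) - ∑' Y, ν n Y • φ Y⟫| := by rw [h1]
      _ ≤ ‖dX‖ * ‖(∑' Y, μ Y • φ Y) - ∑' Y, ν n Y • φ Y‖ := abs_real_inner_le_norm _ _
  constructor
  · intro X
    obtain ⟨dX, hd⟩ := hmass X
    have hsq : Filter.Tendsto (fun n => |μ X - ν n X|) Filter.atTop (nhds 0) := by
      apply squeeze_zero (fun n => abs_nonneg _) (fun n => hineq X dX hd n)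
      have := hMMD.const_mul ‖dX‖
      simpa using this
    have : Filter.Tendsto (fun n => μ X - ν n X) Filter.atTop (nhds 0) := by
      exact tendsto_zero_iff_abs_tendsto_zero _ |>.mpr hsq
    have := (tendsto_const_nhds (x := μ X) (f := Filter.atTop (α := ℕ))).sub this
    simpa using this
  · exact hineq
end

section
/- Let S be a countable set partitioned into disjoint subsets {W_V}_V with S = ∪_V W_V, and let k be a kernel on S such that k(X, X') = 0 whenever X ∈ W_V and X' ∈ W_{V'} with V ≠ V'. If for each V the restriction of k to W_V × W_V has discrete masses (δ_X lies in the RKHS of k restricted to W_V for every X ∈ W_V), then k has discrete masses on all of S. Conversely, if k has discrete masses on S, then each restriction of k to a subset W ⊆ S has discrete masses on W. -/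
open scoped RealInnerProductSpace Classical

/-- **Changing domains preserves discrete masses.**
Let `S` be countable, partitioned into disjoint sets `W V` covering `S`, and let `k` be
a kernel (with RKHS representation `(H, φ)`, dense span) such that `k X X' = 0`
whenever `X` and `X'` lie in different parts.  The RKHS of the restriction of `k` to a
subset `W ⊆ S` is identified with the closed span of `{k(Y,·) : Y ∈ W}` in `H`, so the
restriction has discrete masses at `X ∈ W` iff there is `d` in that closed span with
`⟪d, φ Y⟫ = δ_X(Y)` for all `Y ∈ W`.  Then: (i) if each restriction `k|_{W V}` has
discrete masses, `k` has discrete masses on `S`; and (ii) conversely, if `k` has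
discrete masses on `S`, then every restriction `k|_W` has discrete masses on `W`. -/
theorem change_of_domain_discrete_masses
    {S : Type*} [Countable S] {ι : Type*} (W : ι → Set S)
    (hdisj : Pairwise (Function.onFun Disjoint W))
    (hcover : (⋃ V, W V) = Set.univ)
    (k : S → S → ℝ)
    {H : Type*} [NormedAddCommGroup H] [InnerProductSpace ℝ H] [CompleteSpace H]
    (φ : S → H)
    (hrepr : ∀ X Y : S, ⟪φ X, φ Y⟫ = k X Y)
    (hdense : Dense (Submodule.span ℝ (Set.range φ) : Set H))
    (horth : ∀ V V' : ι, V ≠ V' → ∀ X ∈ W V, ∀ X' ∈ W V', k X X' = 0) :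
    ((∀ V : ι, ∀ X ∈ W V,
        ∃ d ∈ (Submodule.span ℝ (φ '' W V)).topologicalClosure,
          ∀ Y ∈ W V, ⟪d, φ Y⟫ = if Y = X then 1 else 0) →
      ∀ X : S, ∃ d : H, ∀ Y : S, ⟪d, φ Y⟫ = if Y = X then 1 else 0) ∧
    ((∀ X : S, ∃ d : H, ∀ Y : S, ⟪d, φ Y⟫ = if Y = X then 1 else 0) →
      ∀ (Ws : Set S), ∀ X ∈ Ws,
        ∃ d ∈ (Submodule.span ℝ (φ '' Ws)).topologicalClosure,
          ∀ Y ∈ Ws, ⟪d, φ Y⟫ = if Y = X then 1 else 0) := by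
  constructor
  · intro h X
    obtain ⟨V, hXV⟩ : ∃ V, X ∈ W V := by
      have := Set.mem_univ X
      rw [← hcover] at this
      exact Set.mem_iUnion.mp this
    obtain ⟨d, hd, hdY⟩ := h V X hXV
    refine ⟨d, fun Y => ?_⟩
    obtain ⟨V', hYV'⟩ : ∃ V', Y ∈ W V' := by
      have := Set.mem_univ Y
      rw [← hcover] at this
      exact Set.mem_iUnion.mp this
    by_cases hVV : V' = V
    · exact hdY Y (hVV ▸ hYV')
    · have hYX : Y ≠ X := by
        intro h'
        subst h'
        exact Set.disjoint_left.mp (hdisj hVV) hYV' hXV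
      rw [if_neg hYX]
      have hker : (Submodule.span ℝ (φ '' W V)).topologicalClosure ≤
          (innerSL ℝ (φ Y)).ker := by
        apply Submodule.topologicalClosure_minimal
        · rw [Submodule.span_le]
          rintro _ ⟨Z, hZ, rfl⟩
          simp only [SetLike.mem_coe, LinearMap.mem_ker, ContinuousLinearMap.coe_coe,
            innerSL_apply_apply]
          rw [hrepr]
          exact horth V' V hVV Y hYV' Z hZ
        · exact ContinuousLinearMap.isClosed_ker (innerSL ℝ (φ Y))
      have h0 : ⟪φ Y, d⟫ = 0 := hker hd
      rw [real_inner_comm]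
      exact h0
  · intro h Ws X hX
    obtain ⟨d, hd⟩ := h X
    set K := (Submodule.span ℝ (φ '' Ws)).topologicalClosure with hK
    haveI : CompleteSpace K := (Submodule.span ℝ (φ '' Ws)).isClosed_topologicalClosure.completeSpace_coe
    refine ⟨(K.orthogonalProjectionOnto d : H), (K.orthogonalProjectionOnto d).2, fun Y hY => ?_⟩
    have hφY : φ Y ∈ K := Submodule.le_topologicalClosure _ (Submodule.subset_span ⟨Y, hY, rfl⟩)
    have h1 : ⟪d - (K.orthogonalProjectionOnto d : H), φ Y⟫ = 0 :=
      K.starProjection_inner_eq_zero d (φ Y) hφY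
    rw [inner_sub_left] at h1
    have h2 : ⟪(K.orthogonalProjectionOnto d : H), φ Y⟫ = ⟪d, φ Y⟫ := by linarith
    rw [h2]
    exact hd Y
end

section
/- Let 0 < σ < 1 and define the kernel k(m, m') = σ^{max(m, m')} on the natural numbers ℕ. Then k has discrete masses: for every x ∈ ℕ, the indicator function δ_x belongs to the RKHS H_k. Concretely, δ_0 = (σ−1)^{-1}(k(1,·) − k(0,·)), and each δ_x can be written as a finite linear combination of kernel sections by induction. -/
open scoped RealInnerProductSpace Classical

/-- **The kernel `k(m,m') = σ^{max(m,m')}` on ℕ has discrete masses (`0 < σ < 1`).**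
With an RKHS representation `(H, φ)` (so `⟪φ m, φ m'⟫ = σ^{max(m,m')}`, dense span):
the element `(σ−1)⁻¹ • (φ 1 − φ 0)` represents the delta function `δ_0`, and for every
`x ∈ ℕ` the delta function `δ_x` is represented by a finite linear combination of
kernel sections, i.e. an element of the (algebraic) span of `{φ m}`. -/
theorem max_power_kernel_has_discrete_masses
    (σ : ℝ) (hσ0 : 0 < σ) (hσ1 : σ < 1)
    {H : Type*} [NormedAddCommGroup H] [InnerProductSpace ℝ H] [CompleteSpace H]
    (φ : ℕ → H)
    (hrepr : ∀ m m' : ℕ, ⟪φ m, φ m'⟫ = σ ^ (max m m'))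
    (hdense : Dense (Submodule.span ℝ (Set.range φ) : Set H)) :
    (∀ m : ℕ, ⟪(σ - 1)⁻¹ • (φ 1 - φ 0), φ m⟫ = if m = 0 then 1 else 0) ∧
    ∀ x : ℕ, ∃ d ∈ Submodule.span ℝ (Set.range φ),
      ∀ m : ℕ, ⟪d, φ m⟫ = if m = x then 1 else 0 := by
  have hσne : σ ≠ 0 := ne_of_gt hσ0
  have hs1 : σ - 1 ≠ 0 := by linarith
  have hpow : ∀ n : ℕ, σ ^ n ≠ 0 := fun n => pow_ne_zero n hσne
  have h0 : ∀ m : ℕ, ⟪(σ - 1)⁻¹ • (φ 1 - φ 0), φ m⟫ = if m = 0 then 1 else 0 := by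
    intro m
    rw [real_inner_smul_left, inner_sub_left, hrepr, hrepr]
    rcases Nat.eq_zero_or_pos m with hm | hm
    · subst hm
      simp
      field_simp
    · have h1 : max 1 m = m := Nat.max_eq_right hm
      have h2 : max 0 m = m := Nat.zero_max m
      rw [h1, h2, if_neg (Nat.pos_iff_ne_zero.mp hm)]
      ring
  refine ⟨h0, ?_⟩
  intro x
  match x with
  | 0 =>
    refine ⟨(σ - 1)⁻¹ • (φ 1 - φ 0), ?_, h0⟩
    exact Submodule.smul_mem _ _ (Submodule.sub_mem _
      (Submodule.subset_span ⟨1, rfl⟩) (Submodule.subset_span ⟨0, rfl⟩))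
  | Nat.succ n =>
    refine ⟨(σ - 1)⁻¹ • ((σ ^ n)⁻¹ • φ n - ((σ ^ n)⁻¹ + (σ ^ (n+1))⁻¹) • φ (n+1)
        + (σ ^ (n+1))⁻¹ • φ (n+2)), ?_, ?_⟩
    · refine Submodule.smul_mem _ _ (Submodule.add_mem _ (Submodule.sub_mem _
        (Submodule.smul_mem _ _ (Submodule.subset_span ⟨n, rfl⟩))
        (Submodule.smul_mem _ _ (Submodule.subset_span ⟨n+1, rfl⟩)))
        (Submodule.smul_mem _ _ (Submodule.subset_span ⟨n+2, rfl⟩)))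
    · intro m
      rw [real_inner_smul_left, inner_add_left, inner_sub_left,
        real_inner_smul_left, real_inner_smul_left, real_inner_smul_left,
        hrepr, hrepr, hrepr]
      rcases le_or_gt m n with hm | hm
      · have e1 : max n m = n := Nat.max_eq_left hm
        have e2 : max (n+1) m = n+1 := Nat.max_eq_left (by omega)
        have e3 : max (n+2) m = n+2 := Nat.max_eq_left (by omega)
        rw [e1, e2, e3, if_neg (by omega)]
        have : σ ^ (n+1) = σ ^ n * σ := pow_succ σ n
        field_simp
        ring
      · rcases eq_or_lt_of_le (Nat.succ_le_of_lt hm) with hm' | hm'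
        · have e1 : max n m = m := Nat.max_eq_right (by omega)
          have e2 : max (n+1) m = m := Nat.max_eq_right (by omega)
          have e3 : max (n+2) m = n+2 := Nat.max_eq_left (by omega)
          rw [e1, e2, e3, if_pos hm'.symm, ← hm']
          have h1 : σ ^ (n+1+1) = σ ^ (n+1) * σ := pow_succ σ (n+1)
          have h2 : σ ^ (n+1) = σ ^ n * σ := pow_succ σ n
          field_simp
          simp only [Nat.succ_eq_add_one]
          ring
        · have e1 : max n m = m := Nat.max_eq_right (by omega)
          have e2 : max (n+1) m = m := Nat.max_eq_right (by omega)
          have e3 : max (n+2) m = m := Nat.max_eq_right (by omega)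
          rw [e1, e2, e3, if_neg (by omega)]
          field_simp
          ring
end

section
/- Let 𝓑 be a finite alphabet, S the set of all finite strings over 𝓑, and fix L ≥ 1 and a string length of L+1. Let Φ be the weighted degree (Hamming) featurization of lag L: Φ_{l,V}(X) = 1 if the L-mer of X starting at position l equals V ∈ 𝓑^L, else 0. Let A_1 = 𝓑^{L+1} (all strings of length L+1) and A_2 = {X + X_{(0)} : X ∈ 𝓑^L} (length-(L+1) strings ending with their first letter). Then the averaged feature vectors agree: (1/|A_1|) Σ_{X∈A_1} Φ_{l,V}(X) = |𝓑|^{-L} = (1/|A_2|) Σ_{X∈A_2} Φ_{l,V}(X) for every position l ∈ {0,1} and every V ∈ 𝓑^L. Consequently, for the kernel k(X,Y) = ⟨Φ(X), Φ(Y)⟩, every f in span{k(Y,·) : Y ∈ S} satisfies (1/|A_1|) Σ_{X∈A_1} f(X) = (1/|A_2|) Σ_{X∈A_2} f(X). -/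
open scoped Classical

/-- The positional `L`-mer feature of lag `L`: `Φ_{l,V}(X) = 1` iff the `L`-mer of `X`
starting at (0-indexed) position `l` equals `V`. -/
noncomputable def PhiWD {B : Type*} [DecidableEq B] (L l : ℕ) (V : Fin L → B)
    (X : List B) : ℝ :=
  if ∀ i : Fin L, X[l + (i : ℕ)]? = some (V i) then 1 else 0

/-- The weighted degree (Hamming) kernel of lag `L`:
`k_H(X,Y) = ∑_{l,V} Φ_{l,V}(X) Φ_{l,V}(Y)`. -/
noncomputable def kWD {B : Type*} [Fintype B] [DecidableEq B] (L : ℕ)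
    (X Y : List B) : ℝ :=
  ∑ l ∈ Finset.range (max X.length Y.length), ∑ V : Fin L → B,
    PhiWD L l V X * PhiWD L l V Y

lemma ofFn_getElem? {B : Type*} (n : ℕ) (f : Fin n → B) (i : ℕ) :
    (List.ofFn f)[i]? = if h : i < n then some (f ⟨i,h⟩) else none := by
  simp [List.ofFnNthVal]

lemma phi_zero {B : Type*} [DecidableEq B] (L l : ℕ) (hL : 1 ≤ L) (V : Fin L → B)
    (X : List B) (h : X.length < l + L) : PhiWD L l V X = 0 := by
  rw [PhiWD, if_neg]
  intro hc
  have := hc ⟨L - 1, by omega⟩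
  rw [List.getElem?_eq_none (by simp; omega)] at this
  exact nomatch this

lemma sumA1 {B : Type*} [Fintype B] [DecidableEq B] (L l : ℕ) (hl : l ≤ 1) (hL : 1 ≤ L)
    (V : Fin L → B) :
    ∑ t : Fin (L+1) → B, PhiWD L l V (List.ofFn t) = Fintype.card B := by
  have key : ∀ p : Fin (L+1), (∀ i : Fin L, ((p.succAbove i : Fin (L+1)) : ℕ) = l + i) →
      ∑ t : Fin (L+1) → B, PhiWD L l V (List.ofFn t) = Fintype.card B := by
    intro p hp
    rw [← Equiv.sum_comp (Fin.insertNthEquiv (fun _ => B) p)]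
    rw [Fintype.sum_prod_type]
    have key2 : ∀ (b : B) (s : Fin L → B),
        PhiWD L l V (List.ofFn (Fin.insertNthEquiv (fun _ => B) p (b, s))) =
        if s = V then 1 else 0 := by
      intro b s
      rw [PhiWD]
      congr 1
      simp only [eq_iff_iff]
      constructor
      · intro h; funext i
        have := h i
        rw [ofFn_getElem?, dif_pos (by have := (p.succAbove i).isLt; omega)] at this
        have h2 : (⟨l + i, by have := i.isLt; omega⟩ : Fin (L+1)) = p.succAbove i :=
          Fin.ext (by simp [hp i])
        rw [h2] at this
        simp only [Fin.insertNthEquiv, Equiv.coe_fn_mk,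
          Fin.insertNth_apply_succAbove, Option.some_inj] at this
        exact this
      · rintro rfl i
        rw [ofFn_getElem?, dif_pos (by have := i.isLt; omega)]
        have h2 : (⟨l + i, by have := i.isLt; omega⟩ : Fin (L+1)) = p.succAbove i :=
          Fin.ext (by simp [hp i])
        rw [h2]
        simp [Fin.insertNthEquiv, Fin.insertNth_apply_succAbove]
    simp only [key2, Finset.sum_ite_eq' Finset.univ V (fun _ => (1:ℝ)),
      Finset.mem_univ, if_true]
    simp
  interval_cases l
  · exact key (Fin.last L) (fun i => by simp [Fin.succAbove_last, Fin.coe_castSucc])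
  · exact key 0 (fun i => by simp [Fin.succAbove_zero, Fin.val_succ]; omega)

lemma sumA2_0 {B : Type*} [Fintype B] [DecidableEq B] (L : ℕ) (hL : 1 ≤ L)
    (V : Fin L → B) :
    ∑ t : Fin L → B, PhiWD L 0 V (List.ofFn t ++ [t ⟨0, hL⟩]) = 1 := by
  have key : ∀ t : Fin L → B, PhiWD L 0 V (List.ofFn t ++ [t ⟨0, hL⟩]) =
      if t = V then 1 else 0 := by
    intro t
    rw [PhiWD]
    congr 1
    simp only [eq_iff_iff]
    constructor
    · intro h; funext i
      have := h i
      rw [List.getElem?_append_left (by simp [i.isLt]), ofFn_getElem?,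
        dif_pos (by simpa using i.isLt)] at this
      simpa using this
    · rintro rfl i
      rw [List.getElem?_append_left (by simp [i.isLt]), ofFn_getElem?,
        dif_pos (by simpa using i.isLt)]
      simp
  simp only [key]
  simpa using Finset.sum_ite_eq' Finset.univ V (fun _ => (1:ℝ))

lemma sumA2_1 {B : Type*} [Fintype B] [DecidableEq B] (L : ℕ) (hL : 1 ≤ L)
    (V : Fin L → B) :
    ∑ t : Fin L → B, PhiWD L 1 V (List.ofFn t ++ [t ⟨0, hL⟩]) = 1 := by
  set w : Fin L → B := fun j =>
    if _ : (j : ℕ) = 0 then V ⟨L - 1, by omega⟩ else V ⟨(j : ℕ) - 1, by omega⟩ with hw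
  have key : ∀ t : Fin L → B, PhiWD L 1 V (List.ofFn t ++ [t ⟨0, hL⟩]) =
      if t = w then 1 else 0 := by
    intro t
    rw [PhiWD]
    congr 1
    simp only [eq_iff_iff]
    constructor
    · intro h; funext j
      by_cases hj : (j : ℕ) = 0
      · have := h ⟨L - 1, by omega⟩
        rw [List.getElem?_append_right (by simp; omega)] at this
        simp only [List.length_ofFn] at this
        rw [show 1 + (L - 1) - L = 0 by omega] at this
        rw [List.getElem?_cons_zero, Option.some_inj] at this
        have ht : t j = t ⟨0, hL⟩ := congrArg t (Fin.ext hj)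
        rw [ht, this, hw]
        simp [hj]
      · have := h ⟨(j : ℕ) - 1, by omega⟩
        rw [List.getElem?_append_left (by simp; omega), ofFn_getElem?,
          dif_pos (by simp; omega)] at this
        have ht : (⟨1 + ((j:ℕ) - 1), by omega⟩ : Fin L) = j := Fin.ext (by simp; omega)
        rw [ht, Option.some_inj] at this
        rw [this, hw]
        simp [hj]
    · rintro rfl i
      by_cases hi : 1 + (i : ℕ) < L
      · rw [List.getElem?_append_left (by simpa using hi), ofFn_getElem?, dif_pos hi,
          Option.some_inj, hw]
        beta_reduce
        rw [dif_neg (by simp)]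
        exact congrArg V (by apply Fin.ext; simp)
      · have hiL : 1 + (i : ℕ) = L := by have := i.isLt; omega
        rw [List.getElem?_append_right (by simp; omega)]
        simp only [List.length_ofFn]
        rw [show 1 + (i:ℕ) - L = 0 by omega, List.getElem?_cons_zero, Option.some_inj, hw]
        beta_reduce
        rw [dif_pos rfl]
        exact congrArg V (by apply Fin.ext; simp; omega)

  simp only [key]
  simpa using Finset.sum_ite_eq' Finset.univ w (fun _ => (1:ℝ))

lemma kWD_expand {B : Type*} [Fintype B] [DecidableEq B] (L : ℕ)
    (Y : List B) (c : ℝ) {ι : Type*} [Fintype ι] (A : ι → List B)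
    (hA : ∀ i, (A i).length = L + 1) :
    c * ∑ i, kWD L Y (A i) =
      ∑ l ∈ Finset.range (max Y.length (L + 1)), ∑ V : Fin L → B,
        PhiWD L l V Y * (c * ∑ i, PhiWD L l V (A i)) := by
  unfold kWD
  simp only [hA]
  rw [Finset.sum_comm, Finset.mul_sum]
  refine Finset.sum_congr rfl fun l _ => ?_
  rw [Finset.sum_comm, Finset.mul_sum]
  refine Finset.sum_congr rfl fun V _ => ?_
  rw [← Finset.mul_sum]
  ring

/-- **Degeneracy of the weighted degree kernel of lag `L`.**
Let `A₁ = 𝓑^{L+1}` (all strings of length `L+1`, encoded as `List.ofFn t` for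
`t : Fin (L+1) → 𝓑`) and `A₂ = {X ++ [X₀] : X ∈ 𝓑^L}` (length-`(L+1)` strings ending
with their first letter).  Then for every position `l ∈ {0,1}` and every `L`-mer `V`,
the averaged features agree: both averages equal `|𝓑|^{-L}`.  Consequently, every `f`
in the span of the kernel sections of the weighted degree kernel has the same average
over `A₁` as over `A₂`. -/
theorem weighted_degree_kernel_degenerate
    {B : Type*} [Fintype B] [DecidableEq B] (hB : 2 ≤ Fintype.card B)
    (L : ℕ) (hL : 1 ≤ L) :
    (∀ l : ℕ, l ≤ 1 → ∀ V : Fin L → B,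
      ((Fintype.card B : ℝ) ^ (L + 1))⁻¹ *
          ∑ t : Fin (L + 1) → B, PhiWD L l V (List.ofFn t)
        = ((Fintype.card B : ℝ) ^ L)⁻¹ ∧
      ((Fintype.card B : ℝ) ^ L)⁻¹ *
          ∑ t : Fin L → B, PhiWD L l V (List.ofFn t ++ [t ⟨0, hL⟩])
        = ((Fintype.card B : ℝ) ^ L)⁻¹) ∧
    ∀ f ∈ Submodule.span ℝ
        (Set.range fun Y : List B => fun X : List B => kWD L Y X),
      ((Fintype.card B : ℝ) ^ (L + 1))⁻¹ * ∑ t : Fin (L + 1) → B, f (List.ofFn t)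
        = ((Fintype.card B : ℝ) ^ L)⁻¹ *
            ∑ t : Fin L → B, f (List.ofFn t ++ [t ⟨0, hL⟩]) := by
  have hcard : (Fintype.card B : ℝ) ≠ 0 := by positivity
  have part1 : ∀ l : ℕ, l ≤ 1 → ∀ V : Fin L → B,
      ((Fintype.card B : ℝ) ^ (L + 1))⁻¹ *
          ∑ t : Fin (L + 1) → B, PhiWD L l V (List.ofFn t)
        = ((Fintype.card B : ℝ) ^ L)⁻¹ ∧
      ((Fintype.card B : ℝ) ^ L)⁻¹ *
          ∑ t : Fin L → B, PhiWD L l V (List.ofFn t ++ [t ⟨0, hL⟩])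
        = ((Fintype.card B : ℝ) ^ L)⁻¹ := by
    intro l hl V
    constructor
    · rw [sumA1 L l hl hL V, pow_succ, mul_inv, mul_assoc,
        inv_mul_cancel₀ hcard, mul_one]
    · interval_cases l
      · rw [sumA2_0 L hL V, mul_one]
      · rw [sumA2_1 L hL V, mul_one]
  refine ⟨part1, ?_⟩
  -- inner per-(l,V) equality
  have inner : ∀ (l : ℕ) (V : Fin L → B),
      ((Fintype.card B : ℝ) ^ (L + 1))⁻¹ *
          ∑ t : Fin (L + 1) → B, PhiWD L l V (List.ofFn t)
        = ((Fintype.card B : ℝ) ^ L)⁻¹ *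
          ∑ t : Fin L → B, PhiWD L l V (List.ofFn t ++ [t ⟨0, hL⟩]) := by
    intro l V
    by_cases hl : l ≤ 1
    · rw [(part1 l hl V).1, (part1 l hl V).2]
    · have z1 : ∑ t : Fin (L + 1) → B, PhiWD L l V (List.ofFn t) = 0 :=
        Finset.sum_eq_zero fun t _ => phi_zero L l hL V _ (by simp; omega)
      have z2 : ∑ t : Fin L → B, PhiWD L l V (List.ofFn t ++ [t ⟨0, hL⟩]) = 0 :=
        Finset.sum_eq_zero fun t _ => phi_zero L l hL V _ (by simp; omega)
      rw [z1, z2, mul_zero, mul_zero]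
  have gen : ∀ Y : List B,
      ((Fintype.card B : ℝ) ^ (L + 1))⁻¹ *
          ∑ t : Fin (L + 1) → B, kWD L Y (List.ofFn t)
        = ((Fintype.card B : ℝ) ^ L)⁻¹ *
          ∑ t : Fin L → B, kWD L Y (List.ofFn t ++ [t ⟨0, hL⟩]) := by
    intro Y
    rw [kWD_expand L Y _ _ (fun t => by simp), kWD_expand L Y _ _ (fun t => by simp)]
    exact Finset.sum_congr rfl fun l _ => Finset.sum_congr rfl fun V _ => by
      rw [inner l V]
  intro f hf
  induction hf using Submodule.span_induction with
  | mem x hx => obtain ⟨Y, rfl⟩ := hx; exact gen Y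
  | zero => simp
  | add f g _ _ hf hg =>
      simp only [Pi.add_apply]
      rw [Finset.sum_add_distrib, Finset.sum_add_distrib, mul_add, mul_add, hf, hg]
  | smul a f _ hf =>
      simp only [Pi.smul_apply, smul_eq_mul]
      rw [← Finset.mul_sum, ← Finset.mul_sum, mul_left_comm, hf, mul_left_comm]
end

section
/- With notation as in the weighted degree kernel degeneracy: let g : A_1 → ℝ be defined by g(X) = |𝓑| − 1 if X ∈ A_2 and g(X) = −1 if X ∈ A_1 \ A_2. Then for every Y ∈ S, Σ_{X∈A_1} k_H(Y, X) g(X) = 0, where k_H(X,Y) = ⟨Φ(X),Φ(Y)⟩ is the Hamming/weighted degree kernel of lag L. Hence the least-squares kernel regression fit of g over the data set A_1 is the zero function. -/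
open scoped Classical

section Aux
variable {B : Type*} [Fintype B] [DecidableEq B]

lemma sum_if_eq_zero (a : B) : ∑ b : B, (if b = a then (Fintype.card B : ℝ) - 1 else -1) = 0 := by
  have : ∀ b : B, (if b = a then (Fintype.card B : ℝ) - 1 else -1)
      = (if b = a then (Fintype.card B : ℝ) else 0) - 1 := by
    intro b; split <;> ring
  simp only [this, Finset.sum_sub_distrib, Finset.sum_ite_eq, Finset.mem_univ, if_pos]
  simp [Finset.card_univ]

lemma phi_ofFn_big (L l : ℕ) (hL : 1 ≤ L) (hl : 2 ≤ l) (V : Fin L → B) (t : Fin (L+1) → B) :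
    PhiWD L l V (List.ofFn t) = 0 := by
  unfold PhiWD
  rw [if_neg]
  intro h
  have := h ⟨L - 1, by omega⟩
  rw [List.getElem?_ofFn] at this
  simp only [List.ofFnNthVal] at this
  rw [dif_neg (by omega)] at this
  simp at this

lemma phi_ofFn_zero (L : ℕ) (V : Fin L → B) (t : Fin (L+1) → B) :
    PhiWD L 0 V (List.ofFn t) = if ∀ i : Fin L, t i.castSucc = V i then 1 else 0 := by
  unfold PhiWD
  congr 1
  apply propext
  constructor
  · intro h i
    have := h i
    rw [List.getElem?_ofFn] at this
    rw [dif_pos (by omega)] at this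
    simpa [Fin.castSucc, Fin.castAdd, Fin.castLE] using Option.some.inj this
  · intro h i
    rw [List.getElem?_ofFn]
    rw [dif_pos (by omega)]
    exact congrArg some (by simpa [Fin.castSucc, Fin.castAdd, Fin.castLE] using h i)

lemma phi_ofFn_one (L : ℕ) (V : Fin L → B) (t : Fin (L+1) → B) :
    PhiWD L 1 V (List.ofFn t) = if ∀ i : Fin L, t i.succ = V i then 1 else 0 := by
  unfold PhiWD
  congr 1
  apply propext
  constructor
  · intro h i
    have := h i
    rw [List.getElem?_ofFn] at this
    rw [dif_pos (by omega)] at this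
    have e : (⟨1 + (i : ℕ), by omega⟩ : Fin (L+1)) = i.succ := Fin.ext (by simp [Nat.add_comm])
    rw [e] at this
    exact Option.some.inj this
  · intro h i
    rw [List.getElem?_ofFn]
    rw [dif_pos (by omega)]
    have e : (⟨1 + (i : ℕ), by omega⟩ : Fin (L+1)) = i.succ := Fin.ext (by simp [Nat.add_comm])
    rw [e]
    exact congrArg some (h i)

lemma g_ofFn (L : ℕ) (hL : 1 ≤ L) (g : List B → ℝ)
    (hg : ∀ X : List B,
      g X = if ∃ s : Fin L → B, X = List.ofFn s ++ [s ⟨0, hL⟩]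
        then (Fintype.card B : ℝ) - 1 else -1) (t : Fin (L+1) → B) :
    g (List.ofFn t) = if t (Fin.last L) = t (Fin.castSucc ⟨0, hL⟩)
        then (Fintype.card B : ℝ) - 1 else -1 := by
  rw [hg]
  congr 1
  apply propext
  constructor
  · rintro ⟨s, hs⟩
    rw [List.ofFn_succ'] at hs
    rw [List.concat_eq_append] at hs
    obtain ⟨h1, h2⟩ := List.append_inj' hs rfl
    have hfs : (fun i : Fin L => t i.castSucc) = s := List.ofFn_injective h1
    simp only [List.cons.injEq] at h2
    have h2' : t (Fin.last L) = s ⟨0, hL⟩ := h2.1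
    rw [h2', ← hfs]
  · intro h
    refine ⟨fun i => t i.castSucc, ?_⟩
    rw [List.ofFn_succ', List.concat_eq_append, h]

lemma sum_phi_g (L : ℕ) (hL : 1 ≤ L) (g : List B → ℝ)
    (hg : ∀ X : List B,
      g X = if ∃ s : Fin L → B, X = List.ofFn s ++ [s ⟨0, hL⟩]
        then (Fintype.card B : ℝ) - 1 else -1) (l : ℕ) (V : Fin L → B) :
    ∑ t : Fin (L+1) → B, PhiWD L l V (List.ofFn t) * g (List.ofFn t) = 0 := by
  rcases lt_or_ge l 2 with hl | hl
  · interval_cases l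
    · -- l = 0
      simp only [phi_ofFn_zero, g_ofFn L hL g hg]
      rw [← Equiv.sum_comp (Fin.snocEquiv fun _ => B), Fintype.sum_prod_type]
      rw [Finset.sum_comm]
      apply Finset.sum_eq_zero
      intro s _
      simp only [Fin.snocEquiv_apply, Fin.snoc_castSucc, Fin.snoc_last]
      rw [← Finset.mul_sum, sum_if_eq_zero, mul_zero]
    · -- l = 1
      simp only [phi_ofFn_one, g_ofFn L hL g hg]
      rw [← Equiv.sum_comp (Fin.consEquiv fun _ => B), Fintype.sum_prod_type]
      rw [Finset.sum_comm]
      apply Finset.sum_eq_zero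
      intro s _
      simp only [Fin.consEquiv_apply, Fin.cons_succ]
      have h1 : ∀ b : B, Fin.cons (α := fun _ => B) b s (Fin.last L)
          = s ⟨L - 1, by omega⟩ := by
        intro b
        have : Fin.last L = Fin.succ ⟨L - 1, by omega⟩ := Fin.ext (by simp; omega)
        rw [this, Fin.cons_succ]
      have h0 : ∀ b : B, Fin.cons (α := fun _ => B) b s (Fin.castSucc ⟨0, hL⟩) = b := by
        intro b
        have : Fin.castSucc (⟨0, hL⟩ : Fin L) = (0 : Fin (L+1)) := Fin.ext (by simp)
        rw [this, Fin.cons_zero]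
      simp only [h1, h0]
      rw [← Finset.mul_sum]
      have : ∑ b : B, (if s ⟨L - 1, by omega⟩ = b then (Fintype.card B : ℝ) - 1 else -1) = 0 := by
        rw [← sum_if_eq_zero (s ⟨L - 1, by omega⟩)]
        exact Finset.sum_congr rfl fun b _ => by congr 1; exact propext eq_comm
      rw [this, mul_zero]
  · apply Finset.sum_eq_zero
    intro t _
    rw [phi_ofFn_big L l hL hl V t, zero_mul]

end Aux

/-- **Least-squares failure of the weighted degree kernel.**
Let `A₁ = 𝓑^{L+1}` (strings `List.ofFn t` for `t : Fin (L+1) → 𝓑`) and let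
`A₂ ⊆ A₁` consist of the strings ending with their first letter.  Define
`g(X) = |𝓑| − 1` for `X ∈ A₂` and `g(X) = −1` for `X ∈ A₁ \ A₂`.  Then for every
string `Y`, `∑_{X ∈ A₁} k_H(Y, X) g(X) = 0`; hence the least-squares kernel regression
fit of `g` over `A₁` with the weighted degree kernel is the zero function. -/
theorem weighted_degree_least_squares_zero
    {B : Type*} [Fintype B] [DecidableEq B] (hB : 2 ≤ Fintype.card B)
    (L : ℕ) (hL : 1 ≤ L)
    (g : List B → ℝ)
    (hg : ∀ X : List B,
      g X = if ∃ t : Fin L → B, X = List.ofFn t ++ [t ⟨0, hL⟩]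
        then (Fintype.card B : ℝ) - 1 else -1) :
    ∀ Y : List B,
      ∑ t : Fin (L + 1) → B, kWD L Y (List.ofFn t) * g (List.ofFn t) = 0 := by
  intro Y
  simp only [kWD, List.length_ofFn, Finset.sum_mul]
  rw [Finset.sum_comm]
  apply Finset.sum_eq_zero
  intro l _
  rw [Finset.sum_comm]
  apply Finset.sum_eq_zero
  intro V _
  simp only [mul_assoc]
  rw [← Finset.mul_sum, sum_phi_g L hL g hg l V, mul_zero]
end

section
/- Let k_s be a strictly positive definite kernel on the extended alphabet 𝓑 ∪ {$} with k_s($,$) = 1, and define the base position-wise comparison kernel on finite strings (padded with infinite tails of $) by k(X,Y) = Π_{l=0}^∞ k_s(X_{(l)}, Y_{(l)}). Then k is a strictly positive definite kernel on the set S of all finite strings over 𝓑, and k has discrete masses: δ_X ∈ H_k for every X ∈ S. -/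
open scoped RealInnerProductSpace Classical

/-- The base position-wise comparison kernel.  Strings over the alphabet `B` are padded
with an infinite tail of stop symbols: the padded letter of `X` at position `l` is
`X[l]? : Option B`, with `none` playing the role of the stop symbol `$`.  The kernel is
`k(X,Y) = ∏_l k_s(X_{(l)}, Y_{(l)})`; since `k_s($,$) = 1` only finitely many factors
differ from `1`, so the product over `l < max(|X|,|Y|)` computes it. -/
noncomputable def kPW {B : Type*} (ks : Option B → Option B → ℝ)
    (X Y : List B) : ℝ :=
  ∏ l ∈ Finset.range (max X.length Y.length), ks X[l]? Y[l]?

-- decomposition of an SPD kernel on a finite type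
lemma spd_decomp {A : Type*} [Fintype A] [DecidableEq A]
    (K : A → A → ℝ) (hKs : ∀ a b, K a b = K b a)
    (hK : ∀ v : A → ℝ, v ≠ 0 → 0 < ∑ a, ∑ b, v a * v b * K a b) :
    ∃ Bm : Matrix A A ℝ, ∀ a b, K a b = ∑ r, Bm r a * Bm r b := by
  have hherm : (Matrix.of K).IsHermitian := by
    ext a b
    simp [Matrix.IsHermitian, Matrix.conjTranspose, hKs a b]
  have hpsd : (Matrix.of K).PosSemidef := by
    refine Matrix.PosSemidef.of_dotProduct_mulVec_nonneg hherm fun x => ?_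
    by_cases hx : x = 0
    · simp [hx]
    · have := (hK x hx).le
      calc (0:ℝ) ≤ ∑ a, ∑ b, x a * x b * K a b := this
        _ = dotProduct (star x) ((Matrix.of K).mulVec x) := by
            simp [dotProduct, Matrix.mulVec, Finset.mul_sum]
            exact Finset.sum_congr rfl fun a _ => Finset.sum_congr rfl fun b _ => by ring
  obtain ⟨Bm, hBm⟩ : ∃ Bm : Matrix A A ℝ, Matrix.of K = Matrix.conjTranspose Bm * Bm := by
    open MatrixOrder in
    obtain ⟨X, hX, -, hXe⟩ :=
      CFC.exists_sqrt_of_isSelfAdjoint_of_quasispectrumRestricts hpsd.isHermitian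
        (QuasispectrumRestricts.nnreal_of_nonneg hpsd.nonneg)
    have hXt : Matrix.conjTranspose X = X := hX
    exact ⟨X, by rw [hXt]; exact hXe.symm⟩
  refine ⟨Bm, fun a b => ?_⟩
  have := congrArg (fun M => M a b) hBm
  simpa [Matrix.mul_apply, Matrix.conjTranspose_apply] using this


-- key 2-variable identity
lemma key2 {A : Type*} [Fintype A] (Bm : Matrix A A ℝ) (K : A → A → ℝ)
    (hd : ∀ a b, K a b = ∑ r, Bm r a * Bm r b) (u v : A → ℝ) :
    ∑ a, ∑ b, u a * v b * K a b
      = ∑ r, (∑ a, Bm r a * u a) * (∑ b, Bm r b * v b) := by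
  calc ∑ a, ∑ b, u a * v b * K a b
      = ∑ a, ∑ b, ∑ r, (Bm r a * u a) * (Bm r b * v b) := by
        refine Finset.sum_congr rfl fun a _ => Finset.sum_congr rfl fun b _ => ?_
        rw [hd a b, Finset.mul_sum]
        exact Finset.sum_congr rfl fun r _ => by ring
    _ = ∑ a, ∑ r, ∑ b, (Bm r a * u a) * (Bm r b * v b) :=
        Finset.sum_congr rfl fun a _ => Finset.sum_comm
    _ = ∑ r, ∑ a, ∑ b, (Bm r a * u a) * (Bm r b * v b) := Finset.sum_comm
    _ = ∑ r, (∑ a, Bm r a * u a) * (∑ b, Bm r b * v b) :=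
        Finset.sum_congr rfl fun r _ => (Fintype.sum_mul_sum _ _).symm

-- product of SPD kernels is SPD
lemma spd_mul {A C : Type*} [Fintype A] [Fintype C] [DecidableEq A]
    (K : A → A → ℝ) (hKs : ∀ a b, K a b = K b a)
    (hK : ∀ v : A → ℝ, v ≠ 0 → 0 < ∑ a, ∑ b, v a * v b * K a b)
    (M : C → C → ℝ)
    (hM : ∀ g : C → ℝ, g ≠ 0 → 0 < ∑ c, ∑ d, g c * g d * M c d)
    (γ : A × C → ℝ) (hγ : γ ≠ 0) :
    0 < ∑ a, ∑ c, ∑ b, ∑ d, γ (a,c) * γ (b,d) * (K a b * M c d) := by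
  obtain ⟨Bm, hd⟩ := spd_decomp K hKs hK
  set g : A → C → ℝ := fun r c => ∑ a, Bm r a * γ (a, c) with hg
  have step1 : ∑ a, ∑ c, ∑ b, ∑ d, γ (a,c) * γ (b,d) * (K a b * M c d)
      = ∑ c, ∑ d, ∑ r, (g r c * g r d) * M c d := by
    rw [Finset.sum_comm]
    refine Finset.sum_congr rfl fun c _ => ?_
    have hswap : ∀ a : A, ∑ b, ∑ d, γ (a,c) * γ (b,d) * (K a b * M c d)
        = ∑ d, ∑ b, γ (a,c) * γ (b,d) * (K a b * M c d) := fun a => Finset.sum_comm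
    simp only [hswap]
    rw [Finset.sum_comm]
    refine Finset.sum_congr rfl fun d _ => ?_
    have h2 := key2 Bm K hd (fun x => γ (x,c) * M c d) (fun x => γ (x,d))
    calc ∑ a, ∑ b, γ (a,c) * γ (b,d) * (K a b * M c d)
        = ∑ a, ∑ b, (γ (a,c) * M c d) * γ (b,d) * K a b :=
          Finset.sum_congr rfl fun a _ => Finset.sum_congr rfl fun b _ => by ring
      _ = ∑ r, (∑ a, Bm r a * (γ (a,c) * M c d)) * (∑ b, Bm r b * γ (b,d)) := h2
      _ = ∑ r, (g r c * g r d) * M c d := by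
          refine Finset.sum_congr rfl fun r _ => ?_
          have h3 : ∑ a, Bm r a * (γ (a,c) * M c d) = (∑ a, Bm r a * γ (a,c)) * M c d := by
            rw [Finset.sum_mul]; exact Finset.sum_congr rfl fun a _ => by ring
          rw [h3, hg]; ring
  rw [step1]
  have step2 : ∑ c, ∑ d, ∑ r, (g r c * g r d) * M c d
      = ∑ r : A, ∑ c, ∑ d, g r c * g r d * M c d := by
    calc ∑ c, ∑ d, ∑ r, (g r c * g r d) * M c d
        = ∑ c, ∑ r, ∑ d, (g r c * g r d) * M c d :=
          Finset.sum_congr rfl fun c _ => Finset.sum_comm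
      _ = ∑ r : A, ∑ c, ∑ d, g r c * g r d * M c d := Finset.sum_comm
  rw [step2]
  have hterm : ∀ r : A, 0 ≤ ∑ c, ∑ d, g r c * g r d * M c d := by
    intro r
    by_cases h : (g r) = 0
    · simp [h]
    · exact (hM (g r) h).le
  have hex : ∃ r : A, g r ≠ 0 := by
    by_contra hall
    push_neg at hall
    obtain ⟨⟨a₀, c₀⟩, hpc⟩ : ∃ p, γ p ≠ 0 := by
      by_contra hz; push_neg at hz; exact hγ (funext hz)
    have hv : (fun a => γ (a, c₀)) ≠ 0 := fun h => hpc (congrFun h a₀)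
    have hpos := hK _ hv
    have hzero : ∑ a, ∑ b, γ (a,c₀) * γ (b,c₀) * K a b = 0 := by
      rw [key2 Bm K hd (fun a => γ (a,c₀)) (fun b => γ (b,c₀))]
      refine Finset.sum_eq_zero fun r _ => ?_
      have h0 : ∑ a, Bm r a * γ (a, c₀) = 0 := congrFun (hall r) c₀
      rw [h0, zero_mul]
    rw [hzero] at hpos; exact lt_irrefl 0 hpos
  obtain ⟨r₀, hr₀⟩ := hex
  exact Finset.sum_pos' (fun r _ => hterm r) ⟨r₀, Finset.mem_univ r₀, hM (g r₀) hr₀⟩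

-- tensor power of an SPD kernel is SPD
lemma spd_pow {A : Type*} [Fintype A] [DecidableEq A]
    (K : A → A → ℝ) (hKs : ∀ a b, K a b = K b a)
    (hK : ∀ v : A → ℝ, v ≠ 0 → 0 < ∑ a, ∑ b, v a * v b * K a b) :
    ∀ N : ℕ, ∀ γ : (Fin N → A) → ℝ, γ ≠ 0 →
      0 < ∑ t, ∑ u, γ t * γ u * ∏ l, K (t l) (u l) := by
  intro N
  induction N with
  | zero =>
    intro γ hγ
    have h1 : γ (fun i => i.elim0) ≠ 0 := by
      intro h
      apply hγ
      funext t
      have : t = fun i => i.elim0 := funext fun i => i.elim0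
      rw [this]; exact h
    simp only [Finset.univ_unique, Finset.sum_singleton]
    have : (default : Fin 0 → A) = fun i => i.elim0 := funext fun i => i.elim0
    simp [this]
    positivity
  | succ N IH =>
    intro γ hγ
    set γ' : A × (Fin N → A) → ℝ := fun p => γ (Fin.cons p.1 p.2) with hγ'
    have hsum : ∀ F : (Fin (N+1) → A) → ℝ,
        ∑ t, F t = ∑ a, ∑ s : Fin N → A, F (Fin.cons a s) := by
      intro F
      calc ∑ t, F t = ∑ p : A × (Fin N → A), F (Fin.cons p.1 p.2) :=
            Fintype.sum_equiv (Fin.consEquiv (fun _ => A)).symm _ _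
              (fun t => by simp [Fin.consEquiv, Fin.cons_self_tail])
        _ = ∑ a, ∑ s : Fin N → A, F (Fin.cons a s) :=
            Fintype.sum_prod_type (f := fun p => F (Fin.cons p.1 p.2))
    have hne : γ' ≠ 0 := by
      intro h
      apply hγ
      funext t
      have := congrFun h (t 0, Fin.tail t)
      simpa [hγ', Fin.cons_self_tail] using this
    have conv1 : ∑ t, ∑ u, γ t * γ u * ∏ l, K (t l) (u l)
        = ∑ a, ∑ s : Fin N → A, ∑ b, ∑ r : Fin N → A,
            γ' (a,s) * γ' (b,r) * (K a b * ∏ l, K (s l) (r l)) := by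
      rw [hsum]
      refine Finset.sum_congr rfl fun a _ => Finset.sum_congr rfl fun s _ => ?_
      rw [hsum]
      refine Finset.sum_congr rfl fun b _ => Finset.sum_congr rfl fun r _ => ?_
      simp [hγ', Fin.prod_univ_succ]
    rw [conv1]
    exact spd_mul K hKs hK _ (fun g hg => IH g hg) γ' hne

section Strings
variable {B : Type*} [Fintype B] [DecidableEq B]

-- padded injectivity
lemma pad_inj {N : ℕ} {X Y : List B} (hX : X.length ≤ N) (hY : Y.length ≤ N)
    (h : ∀ l : Fin N, X[(l:ℕ)]? = Y[(l:ℕ)]?) : X = Y := by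
  apply List.ext_getElem?
  intro n
  by_cases hn : n < N
  · exact h ⟨n, hn⟩
  · push_neg at hn
    rw [List.getElem?_eq_none (hX.trans hn), List.getElem?_eq_none (hY.trans hn)]

-- kPW as a product over a larger range
lemma kPW_eq_range (ks : Option B → Option B → ℝ) (hstop : ks none none = 1)
    {N : ℕ} {X Y : List B} (hX : X.length ≤ N) (hY : Y.length ≤ N) :
    kPW ks X Y = ∏ l ∈ Finset.range N, ks X[l]? Y[l]? := by
  unfold kPW
  refine Finset.prod_subset (Finset.range_subset_range.mpr (max_le hX hY)) ?_
  intro l _ hl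
  rw [Finset.mem_range, not_lt, max_le_iff] at hl
  rw [List.getElem?_eq_none (hl.1.trans (le_refl _)), List.getElem?_eq_none hl.2, hstop]

lemma kPW_eq_fin (ks : Option B → Option B → ℝ) (hstop : ks none none = 1)
    {N : ℕ} {X Y : List B} (hX : X.length ≤ N) (hY : Y.length ≤ N) :
    kPW ks X Y = ∏ l : Fin N, ks X[(l:ℕ)]? Y[(l:ℕ)]? := by
  rw [kPW_eq_range ks hstop hX hY, ← Fin.prod_univ_eq_prod_range]

-- Part 1: strict positive definiteness of kPW on any finite set of strings
lemma kPW_spd (ks : Option B → Option B → ℝ)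
    (hsymm : ∀ a b, ks a b = ks b a)
    (hspd : ∀ α : Option B → ℝ, α ≠ 0 →
      0 < ∑ a : Option B, ∑ b : Option B, α a * α b * ks a b)
    (hstop : ks none none = 1)
    (T : Finset (List B)) (α : List B → ℝ) (hex : ∃ X ∈ T, α X ≠ 0) :
    0 < ∑ X ∈ T, ∑ Y ∈ T, α X * α Y * kPW ks X Y := by
  classical
  obtain ⟨X₀, hX₀T, hX₀⟩ := hex
  set N := T.sup List.length with hN
  have hlen : ∀ X ∈ T, X.length ≤ N := fun X hX => Finset.le_sup (f := List.length) hX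
  set ι : List B → (Fin N → Option B) := fun X l => X[(l:ℕ)]? with hι
  set γ : (Fin N → Option B) → ℝ :=
    fun t => ∑ X ∈ T.filter (fun X => ι X = t), α X with hγdef
  -- fiberwise lemma
  have hfib : ∀ h : List B → ℝ,
      ∑ t : Fin N → Option B, ∑ X ∈ T.filter (fun X => ι X = t), h X = ∑ X ∈ T, h X :=
    fun h => Finset.sum_fiberwise T ι h
  -- the quadratic form over tuples equals the quadratic form over strings
  have hQ : ∑ t : Fin N → Option B, ∑ u : Fin N → Option B,
        γ t * γ u * ∏ l, ks (t l) (u l)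
      = ∑ X ∈ T, ∑ Y ∈ T, α X * α Y * kPW ks X Y := by
    have inner : ∀ t : Fin N → Option B, ∑ u : Fin N → Option B,
        γ u * ∏ l, ks (t l) (u l)
        = ∑ Y ∈ T, α Y * ∏ l, ks (t l) (ι Y l) := by
      intro t
      calc ∑ u : Fin N → Option B, γ u * ∏ l, ks (t l) (u l)
          = ∑ u, ∑ Y ∈ T.filter (fun Y => ι Y = u), α Y * ∏ l, ks (t l) (ι Y l) := by
            refine Finset.sum_congr rfl fun u _ => ?_
            rw [hγdef, Finset.sum_mul]
            refine Finset.sum_congr rfl fun Y hY => ?_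
            rw [(Finset.mem_filter.mp hY).2]
        _ = ∑ Y ∈ T, α Y * ∏ l, ks (t l) (ι Y l) :=
            Finset.sum_fiberwise T ι _
    calc ∑ t : Fin N → Option B, ∑ u : Fin N → Option B, γ t * γ u * ∏ l, ks (t l) (u l)
        = ∑ t, γ t * ∑ Y ∈ T, α Y * ∏ l, ks (t l) (ι Y l) := by
          refine Finset.sum_congr rfl fun t _ => ?_
          rw [← inner t, Finset.mul_sum]
          exact Finset.sum_congr rfl fun u _ => by ring
      _ = ∑ t, ∑ X ∈ T.filter (fun X => ι X = t),
            α X * ∑ Y ∈ T, α Y * ∏ l, ks (ι X l) (ι Y l) := by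
          refine Finset.sum_congr rfl fun t _ => ?_
          rw [hγdef, Finset.sum_mul]
          refine Finset.sum_congr rfl fun X hX => ?_
          rw [(Finset.mem_filter.mp hX).2]
      _ = ∑ X ∈ T, α X * ∑ Y ∈ T, α Y * ∏ l, ks (ι X l) (ι Y l) :=
          Finset.sum_fiberwise T ι _
      _ = ∑ X ∈ T, ∑ Y ∈ T, α X * α Y * kPW ks X Y := by
          refine Finset.sum_congr rfl fun X hX => ?_
          rw [Finset.mul_sum]
          refine Finset.sum_congr rfl fun Y hY => ?_
          rw [kPW_eq_fin ks hstop (hlen X hX) (hlen Y hY)]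
          ring
  rw [← hQ]
  -- γ is nonzero
  have hfilter : T.filter (fun X => ι X = ι X₀) = {X₀} := by
    ext X
    simp only [Finset.mem_filter, Finset.mem_singleton]
    constructor
    · rintro ⟨hXT, hXι⟩
      exact pad_inj (hlen X hXT) (hlen X₀ hX₀T) (fun l => congrFun hXι l)
    · rintro rfl; exact ⟨hX₀T, rfl⟩
  have hγne : γ ≠ 0 := by
    intro h
    have := congrFun h (ι X₀)
    rw [hγdef] at this
    simp only [hfilter, Finset.sum_singleton] at this
    exact hX₀ this
  exact spd_pow ks hsymm hspd N γ hγne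

end Strings

section Dual
variable {B : Type*} [Fintype B] [DecidableEq B]

lemma kPW_symm (ks : Option B → Option B → ℝ) (hsymm : ∀ a b, ks a b = ks b a)
    (X Y : List B) : kPW ks X Y = kPW ks Y X := by
  unfold kPW
  rw [max_comm]
  exact Finset.prod_congr rfl fun l _ => hsymm _ _

-- splitting off the tail of a long string
lemma kPW_split (ks : Option B → Option B → ℝ) {N : ℕ} {W Y : List B}
    (hW : W.length ≤ N) (hY : N ≤ Y.length) :
    kPW ks W Y = kPW ks W (Y.take N) * ∏ l ∈ Finset.Ico N Y.length, ks none Y[l]? := by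
  have h1 : kPW ks W Y = ∏ l ∈ Finset.range Y.length, ks W[l]? Y[l]? := by
    unfold kPW
    rw [max_eq_right (hW.trans hY)]
  have h2 : kPW ks W (Y.take N) = ∏ l ∈ Finset.range N, ks W[l]? Y[l]? := by
    unfold kPW
    rw [List.length_take, min_eq_left hY, max_eq_right hW]
    refine Finset.prod_congr rfl fun l hl => ?_
    rw [List.getElem?_take, if_pos (Finset.mem_range.mp hl)]
  have h3 : ∀ l ∈ Finset.Ico N Y.length, ks W[l]? Y[l]? = ks none Y[l]? := by
    intro l hl
    rw [List.getElem?_eq_none (hW.trans (Finset.mem_Ico.mp hl).1)]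
  rw [h1, h2, ← Finset.prod_congr rfl h3]
  rw [Finset.range_eq_Ico, Finset.range_eq_Ico]
  exact (Finset.prod_Ico_consecutive (fun l => ks W[l]? Y[l]?) (Nat.zero_le N) hY).symm

-- existence of dual coefficients
lemma exists_dual (ks : Option B → Option B → ℝ)
    (hsymm : ∀ a b, ks a b = ks b a)
    (hspd : ∀ α : Option B → ℝ, α ≠ 0 →
      0 < ∑ a : Option B, ∑ b : Option B, α a * α b * ks a b)
    (hstop : ks none none = 1) (X : List B) :
    ∃ (T : Finset (List B)) (β : List B → ℝ),
      ∀ Y : List B, ∑ W ∈ T, β W * kPW ks W Y = if Y = X then 1 else 0 := by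
  classical
  set N := X.length + 1 with hNdef
  set T : Finset (List B) := (List.finite_length_le B N).toFinset with hT
  have hmem : ∀ W : List B, W ∈ T ↔ W.length ≤ N := by
    intro W; rw [hT, Set.Finite.mem_toFinset]; rfl
  have hXT : X ∈ T := (hmem X).mpr (Nat.le_succ _)
  -- Gram matrix on T
  set G : Matrix {x // x ∈ T} {x // x ∈ T} ℝ :=
    fun W Y => kPW ks (W : List B) (Y : List B) with hG
  -- injectivity of mulVec
  have hinj : Function.Injective G.mulVecLin := by
    rw [← LinearMap.ker_eq_bot, LinearMap.ker_eq_bot']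
    intro v hv
    by_contra hvne
    set α : List B → ℝ := fun W => if h : W ∈ T then v ⟨W, h⟩ else 0 with hα
    have hexα : ∃ W ∈ T, α W ≠ 0 := by
      obtain ⟨⟨W, hWT⟩, hW⟩ : ∃ w, v w ≠ 0 := by
        by_contra hz; push_neg at hz; exact hvne (funext hz)
      exact ⟨W, hWT, by rw [hα]; simpa [hWT] using hW⟩
    have hpos := kPW_spd ks hsymm hspd hstop T α hexα
    have hzero : ∑ W ∈ T, ∑ Y ∈ T, α W * α Y * kPW ks W Y = 0 := by
      calc ∑ W ∈ T, ∑ Y ∈ T, α W * α Y * kPW ks W Y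
          = ∑ W : {x // x ∈ T}, v W * (G.mulVecLin v W) := by
            rw [← Finset.sum_coe_sort T]
            refine Finset.sum_congr rfl fun W _ => ?_
            rw [← Finset.sum_coe_sort T]
            simp only [Matrix.mulVecLin_apply, Matrix.mulVec, dotProduct]
            rw [Finset.mul_sum]
            refine Finset.sum_congr rfl fun Y _ => ?_
            rw [hα, hG]
            simp only [W.2, Y.2, dif_pos]
            ring
        _ = 0 := by rw [hv]; simp
    rw [hzero] at hpos; exact lt_irrefl 0 hpos
  have hsurj : Function.Surjective G.mulVecLin :=
    LinearMap.injective_iff_surjective.mp hinj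
  obtain ⟨β', hβ'⟩ := hsurj (fun Y => if (Y : List B) = X then 1 else 0)
  set β : List B → ℝ := fun W => if h : W ∈ T then β' ⟨W, h⟩ else 0 with hβ
  refine ⟨T, β, fun Y => ?_⟩
  -- first, the property for Y ∈ T
  have hP : ∀ Y ∈ T, ∑ W ∈ T, β W * kPW ks W Y = if Y = X then 1 else 0 := by
    intro Y hYT
    have := congrFun hβ' ⟨Y, hYT⟩
    simp only [Matrix.mulVecLin_apply, Matrix.mulVec, dotProduct] at this
    calc ∑ W ∈ T, β W * kPW ks W Y
        = ∑ W : {x // x ∈ T}, G ⟨Y, hYT⟩ W * β' W := by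
          rw [← Finset.sum_coe_sort T]
          refine Finset.sum_congr rfl fun W _ => ?_
          rw [hβ, hG]
          simp only [W.2, dif_pos]
          rw [kPW_symm ks hsymm]
          ring
      _ = if Y = X then 1 else 0 := this
  by_cases hY : Y.length ≤ N
  · exact hP Y ((hmem Y).mpr hY)
  · push_neg at hY
    have hYne : Y ≠ X := by
      intro h; rw [h] at hY; omega
    rw [if_neg hYne]
    have htake : (Y.take N) ∈ T := by
      rw [hmem, List.length_take]; exact min_le_left _ _
    have htne : Y.take N ≠ X := by
      intro h
      have := congrArg List.length h
      rw [List.length_take, min_eq_left hY.le] at this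
      omega
    calc ∑ W ∈ T, β W * kPW ks W Y
        = (∑ W ∈ T, β W * kPW ks W (Y.take N)) *
            ∏ l ∈ Finset.Ico N Y.length, ks none Y[l]? := by
          rw [Finset.sum_mul]
          refine Finset.sum_congr rfl fun W hWT => ?_
          rw [kPW_split ks ((hmem W).mp hWT) hY.le]
          ring
      _ = 0 := by rw [hP _ htake, if_neg htne, zero_mul]

end Dual


/-- **The base position-wise comparison kernel is strictly positive definite and has
discrete masses.**  Here `k_s` is a symmetric strictly positive definite kernel on the
extended alphabet `𝓑 ∪ {$}` (encoded as `Option B`, with `none = $`) and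
`k_s($,$) = 1`.  Given an RKHS representation `(H, φ)` of `k` with dense span, every
delta function lies in the RKHS. -/
theorem position_wise_kernel_spd_and_discrete_masses
    {B : Type*} [Fintype B] [DecidableEq B]
    (ks : Option B → Option B → ℝ)
    (hsymm : ∀ a b, ks a b = ks b a)
    (hspd : ∀ α : Option B → ℝ, α ≠ 0 →
      0 < ∑ a : Option B, ∑ b : Option B, α a * α b * ks a b)
    (hstop : ks none none = 1)
    {H : Type*} [NormedAddCommGroup H] [InnerProductSpace ℝ H] [CompleteSpace H]
    (φ : List B → H)
    (hrepr : ∀ X Y : List B, ⟪φ X, φ Y⟫ = kPW ks X Y)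
    (hdense : Dense (Submodule.span ℝ (Set.range φ) : Set H)) :
    (∀ (T : Finset (List B)) (α : List B → ℝ), (∃ X ∈ T, α X ≠ 0) →
      0 < ∑ X ∈ T, ∑ Y ∈ T, α X * α Y * kPW ks X Y) ∧
    ∀ X : List B, ∃ d : H, ∀ Y : List B, ⟪d, φ Y⟫ = if Y = X then 1 else 0 := by
  constructor
  · exact fun T α hex => kPW_spd ks hsymm hspd hstop T α hex
  · intro X
    obtain ⟨T, β, hβ⟩ := exists_dual ks hsymm hspd hstop X
    refine ⟨∑ W ∈ T, β W • φ W, fun Y => ?_⟩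
    rw [sum_inner]
    rw [← hβ Y]
    refine Finset.sum_congr rfl fun W _ => ?_
    rw [real_inner_smul_left, hrepr]
end

section
/- Let d_H denote the Hamming distance on the set S of finite strings over a finite alphabet (padded by stop symbols), and let C, β > 0. Then the inverse multiquadric Hamming kernel k(X,Y) = (C + d_H(X,Y))^{−β} is a positive semi-definite kernel on S with discrete masses. It admits the integral representation (C + d)^{−β} = Γ(β)^{−1} ∫_0^∞ λ^{β−1} e^{−Cλ} e^{−λ d} dλ, exhibiting it as a mixture over bandwidths of exponential Hamming kernels e^{−λ d_H(X,Y)}, each of which has discrete masses. -/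
open scoped RealInnerProductSpace Classical

/-- The Hamming distance between two strings over `B`, padded with stop symbols:
the number of positions at which the padded strings (`X[l]? : Option B`, with
`none` the stop symbol) differ. -/
noncomputable def hammingDistL {B : Type*} [DecidableEq B] (X Y : List B) : ℕ :=
  ((Finset.range (max X.length Y.length)).filter fun l => X[l]? ≠ Y[l]?).card

namespace IMQAux
variable {B : Type*} [DecidableEq B]

lemma hamming_eq_sum (X Y : List B) :
    hammingDistL X Y = ∑ l ∈ Finset.range (max X.length Y.length),
      (if X[l]? ≠ Y[l]? then 1 else 0) := by
  rw [hammingDistL, Finset.card_filter]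

lemma hamming_comm (X Y : List B) : hammingDistL X Y = hammingDistL Y X := by
  unfold hammingDistL
  rw [max_comm]
  congr 1
  apply Finset.filter_congr
  intro l _
  simp [ne_comm]

lemma hamming_nil_right (Y : List B) : hammingDistL Y [] = Y.length := by
  unfold hammingDistL
  simp only [List.length_nil, List.getElem?_nil, Nat.max_zero]
  rw [Finset.filter_true_of_mem, Finset.card_range]
  intro l hl
  simp only [Finset.mem_range] at hl
  simp [List.getElem?_eq_getElem hl]

lemma hamming_cons_cons (a b : B) (X Y : List B) :
    hammingDistL (a :: X) (b :: Y) = (if a = b then 0 else 1) + hammingDistL X Y := by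
  rw [hamming_eq_sum, hamming_eq_sum]
  have hmax : max (a :: X).length (b :: Y).length = max X.length Y.length + 1 := by
    simp [Nat.succ_max_succ]
  rw [hmax, Finset.sum_range_succ']
  simp only [List.getElem?_cons_succ, List.getElem?_cons_zero]
  rw [add_comm]
  congr 1
  simp only [ne_eq, Option.some.injEq]
  by_cases h : a = b <;> simp [h]

end IMQAux
open scoped Classical

namespace IMQAux
variable {B : Type*} [DecidableEq B] [Fintype B]

noncomputable def stringsLE : ℕ → Finset (List B)
  | 0 => {[]}
  | (N + 1) =>
      insert [] ((Finset.univ (α := B) ×ˢ stringsLE N).image fun p => p.1 :: p.2)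

lemma mem_stringsLE : ∀ {N : ℕ} {l : List B}, l ∈ stringsLE N ↔ l.length ≤ N
  | 0, l => by
      simp only [stringsLE, Finset.mem_singleton, Nat.le_zero, List.length_eq_zero_iff]
  | (N + 1), l => by
      simp only [stringsLE, Finset.mem_insert, Finset.mem_image, Finset.mem_product]
      constructor
      · rintro (rfl | ⟨⟨a, m⟩, ⟨-, hm⟩, rfl⟩)
        · simp
        · simpa using Nat.succ_le_succ (mem_stringsLE.1 hm)
      · intro hl
        rcases l with _ | ⟨a, m⟩
        · exact Or.inl rfl
        · exact Or.inr ⟨⟨a, m⟩, ⟨Finset.mem_univ a,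
            mem_stringsLE.2 (Nat.le_of_succ_le_succ hl)⟩, rfl⟩

lemma nil_mem_stringsLE (N : ℕ) : ([] : List B) ∈ stringsLE N :=
  mem_stringsLE.2 (by simp)

lemma sum_stringsLE (f : List B → ℝ) (N : ℕ) :
    ∑ Y ∈ stringsLE (N + 1), f Y = f [] + ∑ a : B, ∑ Y ∈ stringsLE N, f (a :: Y) := by
  rw [stringsLE, Finset.sum_insert, Finset.sum_image, Finset.sum_product]
  · intro p _ r _ h
    simpa [Prod.ext_iff] using h
  · simp

end IMQAux

namespace IMQAux
variable {B : Type*} [DecidableEq B] [Fintype B]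

lemma hamming_nil_left (Z : List B) : hammingDistL [] Z = Z.length := by
  rw [hamming_comm, hamming_nil_right]

lemma hamming_nil_nil : hammingDistL ([] : List B) [] = 0 := by
  simpa using hamming_nil_right ([] : List B)

/-- The exponential-kernel quadratic form over all strings of length `≤ N`. -/
noncomputable def expQ (q : ℝ) (N : ℕ) (c : List B → ℝ) : ℝ :=
  ∑ Y ∈ stringsLE N, ∑ Z ∈ stringsLE N, c Y * c Z * q ^ hammingDistL Y Z

/-- Pairing with the delta at the empty string. -/
noncomputable def expA (q : ℝ) (N : ℕ) (c : List B → ℝ) : ℝ :=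
  ∑ Y ∈ stringsLE N, c Y * q ^ Y.length

lemma sum_delta (N : ℕ) (s : ℝ) (g : List B → ℝ) :
    ∑ Y ∈ stringsLE N, (if Y = [] then s else 0) * g Y = s * g [] := by
  rw [Finset.sum_eq_single_of_mem ([] : List B) (nil_mem_stringsLE N)]
  · simp
  · intro b _ hb
    simp [hb]

lemma expQ_expand (q : ℝ) (N : ℕ) (c : List B → ℝ) (s : ℝ) :
    expQ q N (fun Y => c Y - if Y = [] then s else 0)
      = expQ q N c - 2 * s * expA q N c + s ^ 2 := by
  unfold expQ
  have key : ∀ Y Z : List B,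
      (c Y - if Y = [] then s else 0) * (c Z - if Z = [] then s else 0) * q ^ hammingDistL Y Z
        = c Y * c Z * q ^ hammingDistL Y Z
          - (if Y = [] then s else 0) * (c Z * q ^ hammingDistL Y Z)
          - (if Z = [] then s else 0) * (c Y * q ^ hammingDistL Y Z)
          + (if Y = [] then s else 0) * ((if Z = [] then s else 0) * q ^ hammingDistL Y Z) := by
    intro Y Z; ring
  simp only [key, Finset.sum_add_distrib, Finset.sum_sub_distrib]
  have h2 : ∑ Y ∈ stringsLE N, ∑ Z ∈ stringsLE N,
      (if Y = [] then s else 0) * (c Z * q ^ hammingDistL Y Z) = s * expA q N c := by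
    have : ∀ Y ∈ stringsLE N, ∑ Z ∈ stringsLE N,
        (if Y = [] then s else 0) * (c Z * q ^ hammingDistL Y Z)
          = (if Y = [] then s else 0) * (∑ Z ∈ stringsLE N, c Z * q ^ hammingDistL Y Z) := by
      intro Y _; rw [Finset.mul_sum]
    rw [Finset.sum_congr rfl this, sum_delta]
    congr 1
    unfold expA
    exact Finset.sum_congr rfl fun Z _ => by rw [hamming_nil_left]
  have h3 : ∑ Y ∈ stringsLE N, ∑ Z ∈ stringsLE N,
      (if Z = [] then s else 0) * (c Y * q ^ hammingDistL Y Z) = s * expA q N c := by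
    rw [Finset.sum_comm]
    have : ∀ Z ∈ stringsLE N, ∑ Y ∈ stringsLE N,
        (if Z = [] then s else 0) * (c Y * q ^ hammingDistL Y Z)
          = (if Z = [] then s else 0) * (∑ Y ∈ stringsLE N, c Y * q ^ hammingDistL Y Z) := by
      intro Z _; rw [Finset.mul_sum]
    rw [Finset.sum_congr rfl this, sum_delta]
    congr 1
    unfold expA
    exact Finset.sum_congr rfl fun Y _ => by rw [hamming_nil_right]
  have h4 : ∑ Y ∈ stringsLE (B := B) N, ∑ Z ∈ stringsLE (B := B) N,
      (if Y = [] then s else 0) * ((if Z = [] then s else 0) * q ^ hammingDistL Y Z)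
        = s ^ 2 := by
    have : ∀ Y ∈ stringsLE (B := B) N, ∑ Z ∈ stringsLE (B := B) N,
        (if Y = [] then s else 0) * ((if Z = [] then s else 0) * q ^ hammingDistL Y Z)
          = (if Y = [] then s else 0) *
            ∑ Z ∈ stringsLE (B := B) N, (if Z = [] then s else 0) * q ^ hammingDistL Y Z := by
      intro Y _; rw [Finset.mul_sum]
    rw [Finset.sum_congr rfl this]
    have h5 : ∀ Y : List B, ∑ Z ∈ stringsLE (B := B) N, (if Z = [] then s else 0) * q ^ hammingDistL Y Z
        = s * q ^ hammingDistL Y [] := fun Y => sum_delta N s (fun Z => q ^ hammingDistL Y Z)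
    simp only [h5]
    rw [sum_delta]
    rw [hamming_nil_nil]
    ring
  rw [h2, h3, h4]
  ring

end IMQAux

namespace IMQAux
variable {B : Type*} [DecidableEq B] [Fintype B]

lemma expA_sq_le (q : ℝ) (N : ℕ) (hnn : ∀ c : List B → ℝ, 0 ≤ expQ q N c)
    (c : List B → ℝ) : (expA q N c) ^ 2 ≤ expQ q N c := by
  have h := hnn (fun Y => c Y - if Y = [] then expA q N c else 0)
  rw [expQ_expand] at h
  nlinarith [h]

lemma expA_gamma (q : ℝ) (N : ℕ) (c : List B → ℝ) :
    expA q N (fun Y => ∑ a : B, c (a :: Y))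
      = ∑ a : B, ∑ Y ∈ stringsLE N, c (a :: Y) * q ^ Y.length := by
  unfold expA
  rw [Finset.sum_comm]
  exact Finset.sum_congr rfl fun Y _ => by rw [Finset.sum_mul]

lemma expQ_gamma (q : ℝ) (N : ℕ) (c : List B → ℝ) :
    expQ q N (fun Y => ∑ a : B, c (a :: Y))
      = ∑ a : B, ∑ Y ∈ stringsLE N, ∑ b : B, ∑ Z ∈ stringsLE N,
          c (a :: Y) * c (b :: Z) * q ^ hammingDistL Y Z := by
  unfold expQ
  have step1 : ∀ Y Z : List B,
      (∑ a : B, c (a :: Y)) * (∑ b : B, c (b :: Z)) * q ^ hammingDistL Y Z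
        = ∑ a : B, ∑ b : B, c (a :: Y) * c (b :: Z) * q ^ hammingDistL Y Z := by
    intro Y Z
    rw [Finset.sum_mul_sum, Finset.sum_mul]
    exact Finset.sum_congr rfl fun a _ => by rw [Finset.sum_mul]
  simp only [step1]
  -- current shape : ∑ Y, ∑ Z, ∑ a, ∑ b
  rw [show (∑ Y ∈ stringsLE (B := B) N, ∑ Z ∈ stringsLE (B := B) N, ∑ a : B, ∑ b : B,
        c (a :: Y) * c (b :: Z) * q ^ hammingDistL Y Z)
      = ∑ Y ∈ stringsLE (B := B) N, ∑ a : B, ∑ Z ∈ stringsLE (B := B) N, ∑ b : B,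
        c (a :: Y) * c (b :: Z) * q ^ hammingDistL Y Z from
    Finset.sum_congr rfl fun Y _ => Finset.sum_comm]
  rw [Finset.sum_comm]
  exact Finset.sum_congr rfl fun a _ => Finset.sum_congr rfl fun Y _ => Finset.sum_comm

lemma expQ_succ (q : ℝ) (N : ℕ) (c : List B → ℝ) :
    expQ q (N + 1) c
      = (c []) ^ 2 + 2 * q * (c []) * expA q N (fun Y => ∑ a : B, c (a :: Y))
        + q * expQ q N (fun Y => ∑ a : B, c (a :: Y))
        + (1 - q) * ∑ a : B, expQ q N (fun Y => c (a :: Y)) := by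
  have hrw : expQ q (N + 1) c
      = c [] * c [] * q ^ hammingDistL ([] : List B) []
        + (∑ b : B, ∑ Z ∈ stringsLE N, c [] * c (b :: Z) * q ^ hammingDistL [] (b :: Z))
        + ∑ a : B, ∑ Y ∈ stringsLE N,
            (c (a :: Y) * c [] * q ^ hammingDistL (a :: Y) []
              + ∑ b : B, ∑ Z ∈ stringsLE N,
                  c (a :: Y) * c (b :: Z) * q ^ hammingDistL (a :: Y) (b :: Z)) := by
    unfold expQ
    rw [sum_stringsLE (fun Y => ∑ Z ∈ stringsLE (N + 1),
      c Y * c Z * q ^ hammingDistL Y Z) N]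
    rw [sum_stringsLE (fun Z => c [] * c Z * q ^ hammingDistL [] Z) N]
    congr 1
    exact Finset.sum_congr rfl fun a _ => Finset.sum_congr rfl fun Y _ => by
      rw [sum_stringsLE (fun Z => c (a :: Y) * c Z * q ^ hammingDistL (a :: Y) Z) N]
  rw [hrw, hamming_nil_nil]
  -- term (1) : ∑ b ∑ Z c [] * c (b::Z) * q ^ (Z.length + 1)
  have h1 : (∑ b : B, ∑ Z ∈ stringsLE N, c [] * c (b :: Z) * q ^ hammingDistL [] (b :: Z))
      = q * (c []) * expA q N (fun Y => ∑ a : B, c (a :: Y)) := by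
    rw [expA_gamma, Finset.mul_sum]
    refine Finset.sum_congr rfl fun b _ => ?_
    rw [Finset.mul_sum]
    refine Finset.sum_congr rfl fun Z _ => ?_
    rw [hamming_nil_left, List.length_cons, pow_succ]
    ring
  -- split the big sum into diagonal-first-letter part
  have h2 : ∀ a : B, ∀ Y : List B,
      (c (a :: Y) * c [] * q ^ hammingDistL (a :: Y) []
        + ∑ b : B, ∑ Z ∈ stringsLE N,
            c (a :: Y) * c (b :: Z) * q ^ hammingDistL (a :: Y) (b :: Z))
      = c (a :: Y) * c [] * q ^ (Y.length + 1)
        + (∑ b : B, ∑ Z ∈ stringsLE N,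
            q * (c (a :: Y) * c (b :: Z) * q ^ hammingDistL Y Z))
        + (1 - q) * ∑ Z ∈ stringsLE N,
            c (a :: Y) * c (a :: Z) * q ^ hammingDistL Y Z := by
    intro a Y
    rw [hamming_nil_right, List.length_cons, add_assoc]
    congr 1
    have key : ∀ b : B, ∀ Z : List B,
        c (a :: Y) * c (b :: Z) * q ^ hammingDistL (a :: Y) (b :: Z)
          = q * (c (a :: Y) * c (b :: Z) * q ^ hammingDistL Y Z)
            + (if b = a then (1 - q) * (c (a :: Y) * c (b :: Z) * q ^ hammingDistL Y Z)
               else 0) := by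
      intro b Z
      rw [hamming_cons_cons]
      by_cases hab : a = b
      · rw [if_pos hab, if_pos hab.symm, pow_add, pow_zero]
        ring
      · rw [if_neg hab, if_neg (fun h => hab h.symm), pow_add, pow_one]
        ring
    simp only [key, Finset.sum_add_distrib]
    congr 1
    rw [Finset.sum_comm, Finset.mul_sum]
    refine Finset.sum_congr rfl fun Z _ => ?_
    rw [Finset.sum_ite_eq' Finset.univ a
      (fun b => (1 - q) * (c (a :: Y) * c (b :: Z) * q ^ hammingDistL Y Z))]
    simp
  rw [h1]
  have h3 : (∑ a : B, ∑ Y ∈ stringsLE N, c (a :: Y) * c [] * q ^ (Y.length + 1))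
      = q * c [] * expA q N (fun Y => ∑ a : B, c (a :: Y)) := by
    rw [expA_gamma, Finset.mul_sum]
    refine Finset.sum_congr rfl fun a _ => ?_
    rw [Finset.mul_sum]
    refine Finset.sum_congr rfl fun Y _ => ?_
    rw [pow_succ]
    ring
  have h4 : (∑ a : B, ∑ Y ∈ stringsLE N, ∑ b : B, ∑ Z ∈ stringsLE N,
        q * (c (a :: Y) * c (b :: Z) * q ^ hammingDistL Y Z))
      = q * expQ q N (fun Y => ∑ a : B, c (a :: Y)) := by
    rw [expQ_gamma]
    simp only [Finset.mul_sum]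
  have h5 : (∑ a : B, ∑ Y ∈ stringsLE N,
        (1 - q) * ∑ Z ∈ stringsLE N, c (a :: Y) * c (a :: Z) * q ^ hammingDistL Y Z)
      = (1 - q) * ∑ a : B, expQ q N (fun Y => c (a :: Y)) := by
    simp only [expQ, Finset.mul_sum]
  simp only [h2, Finset.sum_add_distrib]
  rw [h3, h4, h5, pow_zero]
  ring

end IMQAux

namespace IMQAux
variable {B : Type*} [DecidableEq B] [Fintype B]

lemma expQ_zero (q : ℝ) (c : List B → ℝ) : expQ q 0 c = c [] * c [] := by
  unfold expQ stringsLE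
  simp [hamming_nil_nil]

lemma expQ_key (q : ℝ) (h0 : 0 ≤ q) (h1 : q ≤ 1) (N : ℕ) :
    (∀ c : List B → ℝ, 0 ≤ expQ q N c) ∧
      (∀ (c : List B → ℝ) (X : List B), X ∈ stringsLE (B := B) N →
        (1 - q) ^ (X.length + 1) * (c X) ^ 2 ≤ expQ q N c) := by
  induction N with
  | zero =>
    constructor
    · intro c
      rw [expQ_zero]
      exact mul_self_nonneg _
    · intro c X hX
      have hX0 : X = [] := by
        have := mem_stringsLE.1 hX
        simpa using List.length_eq_zero_iff.1 (Nat.le_zero.1 this)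
      subst hX0
      rw [expQ_zero]
      simp only [List.length_nil, pow_one, zero_add]
      nlinarith [sq_nonneg (c []), mul_nonneg h0 (sq_nonneg (c []))]
  | succ N IH =>
    obtain ⟨IH0, IH1⟩ := IH
    have hCS := expA_sq_le q N IH0
    have main : ∀ c : List B → ℝ,
        (1 - q) * (c []) ^ 2 + (1 - q) * ∑ a : B, expQ q N (fun Y => c (a :: Y))
          ≤ expQ q (N + 1) c := by
      intro c
      rw [expQ_succ]
      have hA := hCS (fun Y => ∑ a : B, c (a :: Y))
      nlinarith [mul_nonneg h0 (sq_nonneg (c [] + expA q N (fun Y => ∑ a : B, c (a :: Y)))),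
        mul_nonneg h0 (sub_nonneg.2 hA)]
    have hSnn : ∀ c : List B → ℝ, 0 ≤ ∑ a : B, expQ q N (fun Y => c (a :: Y)) :=
      fun c => Finset.sum_nonneg fun a _ => IH0 _
    have h1q : (0:ℝ) ≤ 1 - q := sub_nonneg.2 h1
    constructor
    · intro c
      refine le_trans ?_ (main c)
      have hh1 := mul_nonneg h1q (sq_nonneg (c []))
      have hh2 := mul_nonneg h1q (hSnn c)
      linarith
    · intro c X hX
      rcases X with _ | ⟨a, X'⟩
      · refine le_trans ?_ (main c)
        have : (1 - q) ^ (List.length ([] : List B) + 1) * (c []) ^ 2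
            = (1 - q) * (c []) ^ 2 := by simp
        rw [this]
        have := mul_nonneg h1q (hSnn c)
        linarith
      · have hX' : X' ∈ stringsLE (B := B) N :=
          mem_stringsLE.2 (Nat.le_of_succ_le_succ (by simpa using mem_stringsLE.1 hX))
        have step1 : (1 - q) ^ ((a :: X').length + 1) * (c (a :: X')) ^ 2
            = (1 - q) * ((1 - q) ^ (X'.length + 1) * ((fun Y => c (a :: Y)) X') ^ 2) := by
          rw [List.length_cons]; ring
        rw [step1]
        calc (1 - q) * ((1 - q) ^ (X'.length + 1) * ((fun Y => c (a :: Y)) X') ^ 2)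
            ≤ (1 - q) * expQ q N (fun Y => c (a :: Y)) :=
              mul_le_mul_of_nonneg_left (IH1 (fun Y => c (a :: Y)) X' hX') h1q
          _ ≤ (1 - q) * ∑ b : B, expQ q N (fun Y => c (b :: Y)) :=
              mul_le_mul_of_nonneg_left
                (Finset.single_le_sum (f := fun b => expQ q N fun Y => c (b :: Y))
                  (fun b _ => IH0 _) (Finset.mem_univ a)) h1q
          _ ≤ (1 - q) * (c []) ^ 2 + (1 - q) * ∑ b : B, expQ q N (fun Y => c (b :: Y)) := by
              nlinarith [sq_nonneg (c [])]
          _ ≤ expQ q (N + 1) c := main c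

end IMQAux

namespace IMQAux
open MeasureTheory Set Real

/-- The Gamma-integral representation of the inverse multiquadric weight. -/
lemma gamma_repr {C β : ℝ} (hC : 0 < C) (hβ : 0 < β) (d : ℕ) :
    (C + (d : ℝ)) ^ (-β) = (Real.Gamma β)⁻¹ *
      ∫ t in Set.Ioi (0 : ℝ),
        t ^ (β - 1) * Real.exp (-(C * t)) * Real.exp (-(t * (d : ℝ))) := by
  have hr : (0 : ℝ) < C + d := by positivity
  have hfun : ∀ t : ℝ,
      t ^ (β - 1) * Real.exp (-(C * t)) * Real.exp (-(t * (d : ℝ)))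
        = t ^ (β - 1) * Real.exp (-((C + d) * t)) := by
    intro t
    rw [mul_assoc, ← Real.exp_add]
    congr 2
    ring
  rw [show (∫ t in Set.Ioi (0 : ℝ),
      t ^ (β - 1) * Real.exp (-(C * t)) * Real.exp (-(t * (d : ℝ))))
    = ∫ t in Set.Ioi (0 : ℝ), t ^ (β - 1) * Real.exp (-((C + d) * t)) from
    integral_congr_ae (Filter.Eventually.of_forall fun t => hfun t)]
  rw [Real.integral_rpow_mul_exp_neg_mul_Ioi hβ hr]
  rw [one_div, Real.inv_rpow hr.le, Real.rpow_neg hr.le]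
  have hΓ : Real.Gamma β ≠ 0 := (Real.Gamma_pos_of_pos hβ).ne'
  field_simp

lemma integrable_weight {β : ℝ} (hβ : 0 < β) {r : ℝ} (hr : 0 < r) :
    MeasureTheory.IntegrableOn
      (fun t : ℝ => t ^ (β - 1) * Real.exp (-(r * t))) (Set.Ioi 0) := by
  have h := integrableOn_rpow_mul_exp_neg_mul_rpow (s := β - 1) (p := 1) (b := r)
    (by linarith) one_pos hr
  refine h.congr_fun (fun t ht => ?_) measurableSet_Ioi
  beta_reduce
  rw [Real.rpow_one, neg_mul]

lemma integrable_g {C β : ℝ} (hC : 0 < C) (hβ : 0 < β) (d : ℕ) :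
    MeasureTheory.IntegrableOn
      (fun t : ℝ => t ^ (β - 1) * Real.exp (-(C * t)) * Real.exp (-(t * (d : ℝ))))
      (Set.Ioi 0) := by
  have hr : (0 : ℝ) < C + d := by positivity
  refine (integrable_weight hβ hr).congr_fun (fun t ht => ?_) measurableSet_Ioi
  rw [mul_assoc, ← Real.exp_add]
  congr 2
  ring

/-- The uniform "discrete mass" for strings of length `m`. -/
noncomputable def eps (C β : ℝ) (m : ℕ) : ℝ :=
  (Real.Gamma β)⁻¹ * ∫ t in Set.Ioi (0 : ℝ),
    t ^ (β - 1) * Real.exp (-(C * t)) * (1 - Real.exp (-t)) ^ (m + 1)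

lemma integrable_lower {C β : ℝ} (hC : 0 < C) (hβ : 0 < β) (m : ℕ) :
    MeasureTheory.IntegrableOn
      (fun t : ℝ => t ^ (β - 1) * Real.exp (-(C * t)) * (1 - Real.exp (-t)) ^ (m + 1))
      (Set.Ioi 0) := by
  refine MeasureTheory.Integrable.mono' (integrable_weight hβ hC) ?_ ?_
  · have hcont : ContinuousOn
        (fun t : ℝ => t ^ (β - 1) * Real.exp (-(C * t)) * (1 - Real.exp (-t)) ^ (m + 1))
        (Set.Ioi 0) := by
      refine ContinuousOn.mul (ContinuousOn.mul ?_ ?_) ?_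
      · intro t ht
        exact (Real.continuousAt_rpow_const t _ (Or.inl (ne_of_gt ht))).continuousWithinAt
      · exact (Real.continuous_exp.comp (continuous_const.mul continuous_id).neg).continuousOn
      · exact ((continuous_const.sub (Real.continuous_exp.comp continuous_neg)).pow
          (m + 1)).continuousOn
    exact hcont.aestronglyMeasurable measurableSet_Ioi
  · refine (MeasureTheory.ae_restrict_iff' measurableSet_Ioi).2
      (Filter.Eventually.of_forall fun t ht => ?_)
    have ht0 : (0:ℝ) < t := ht
    have hq0 : 0 ≤ Real.exp (-t) := (Real.exp_pos _).le
    have hq1 : Real.exp (-t) ≤ 1 := Real.exp_le_one_iff.2 (by linarith)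
    have h01 : 0 ≤ 1 - Real.exp (-t) := by linarith
    have hb : (1 - Real.exp (-t)) ^ (m + 1) ≤ 1 :=
      pow_le_one₀ h01 (by linarith)
    have hw : 0 ≤ t ^ (β - 1) * Real.exp (-(C * t)) := by positivity
    rw [Real.norm_eq_abs, abs_of_nonneg (by positivity)]
    calc t ^ (β - 1) * Real.exp (-(C * t)) * (1 - Real.exp (-t)) ^ (m + 1)
        ≤ t ^ (β - 1) * Real.exp (-(C * t)) * 1 := by
          exact mul_le_mul_of_nonneg_left hb hw
      _ = t ^ (β - 1) * Real.exp (-(C * t)) := mul_one _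

lemma eps_pos {C β : ℝ} (hC : 0 < C) (hβ : 0 < β) (m : ℕ) : 0 < eps C β m := by
  have hΓ : 0 < (Real.Gamma β)⁻¹ := inv_pos.2 (Real.Gamma_pos_of_pos hβ)
  refine mul_pos hΓ ?_
  set f : ℝ → ℝ := fun t => t ^ (β - 1) * Real.exp (-(C * t)) * (1 - Real.exp (-t)) ^ (m + 1)
    with hf
  have hnn : 0 ≤ᵐ[MeasureTheory.volume.restrict (Set.Ioi (0:ℝ))] f := by
    refine (MeasureTheory.ae_restrict_iff' measurableSet_Ioi).2
      (Filter.Eventually.of_forall fun t ht => ?_)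
    have ht0 : (0:ℝ) < t := ht
    have hq1 : Real.exp (-t) < 1 := Real.exp_lt_one_iff.2 (by linarith)
    have : (0:ℝ) ≤ 1 - Real.exp (-t) := by linarith
    positivity
  rw [MeasureTheory.integral_pos_iff_support_of_nonneg_ae hnn (integrable_lower hC hβ m)]
  have hsupp : Set.Ioi (0:ℝ) ⊆ Function.support f := by
    intro t ht
    have ht0 : (0:ℝ) < t := ht
    have hq1 : Real.exp (-t) < 1 := Real.exp_lt_one_iff.2 (by linarith)
    have h1 : (0:ℝ) < 1 - Real.exp (-t) := by linarith
    have : 0 < f t := by rw [hf]; positivity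
    exact this.ne'
  calc (0 : ENNReal) < MeasureTheory.volume.restrict (Set.Ioi (0:ℝ)) (Set.Ioi (0:ℝ)) := by
        rw [MeasureTheory.Measure.restrict_apply_self, Real.volume_Ioi]
        simp
    _ ≤ MeasureTheory.volume.restrict (Set.Ioi (0:ℝ)) (Function.support f) :=
        MeasureTheory.measure_mono hsupp

end IMQAux

namespace IMQAux
open MeasureTheory Set Real

variable {B : Type*} [DecidableEq B] [Fintype B]

lemma quad_lower {C β : ℝ} (hC : 0 < C) (hβ : 0 < β) (N : ℕ)
    (c : List B → ℝ) (X : List B) (hX : X ∈ stringsLE (B := B) N) :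
    eps C β X.length * (c X) ^ 2 ≤
      ∑ Y ∈ stringsLE (B := B) N, ∑ Z ∈ stringsLE (B := B) N,
        c Y * c Z * (C + (hammingDistL Y Z : ℝ)) ^ (-β) := by
  classical
  set SN := stringsLE (B := B) N with hSN
  set P := SN ×ˢ SN with hP
  set w : ℝ → ℝ := fun t => t ^ (β - 1) * Real.exp (-(C * t)) with hw
  set g : List B × List B → ℝ → ℝ := fun p t =>
    c p.1 * c p.2 * (t ^ (β - 1) * Real.exp (-(C * t))
      * Real.exp (-(t * (hammingDistL p.1 p.2 : ℝ)))) with hg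
  have hΓ : 0 ≤ (Real.Gamma β)⁻¹ := (inv_pos.2 (Real.Gamma_pos_of_pos hβ)).le
  have hint : ∀ p ∈ P, MeasureTheory.Integrable (g p)
      (MeasureTheory.volume.restrict (Set.Ioi (0:ℝ))) := by
    intro p _
    exact (integrable_g hC hβ (hammingDistL p.1 p.2)).const_mul _
  have hflat : (∑ Y ∈ SN, ∑ Z ∈ SN, c Y * c Z * (C + (hammingDistL Y Z : ℝ)) ^ (-β))
      = ∑ p ∈ P, c p.1 * c p.2 * (C + (hammingDistL p.1 p.2 : ℝ)) ^ (-β) :=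
    (Finset.sum_product' SN SN
      fun Y Z => c Y * c Z * (C + (hammingDistL Y Z : ℝ)) ^ (-β)).symm
  have hrepr : (∑ p ∈ P, c p.1 * c p.2 * (C + (hammingDistL p.1 p.2 : ℝ)) ^ (-β))
      = (Real.Gamma β)⁻¹ * ∫ t in Set.Ioi (0:ℝ), ∑ p ∈ P, g p t := by
    rw [MeasureTheory.integral_finset_sum _ hint, Finset.mul_sum]
    refine Finset.sum_congr rfl fun p _ => ?_
    rw [gamma_repr hC hβ (hammingDistL p.1 p.2)]
    rw [show c p.1 * c p.2 * ((Real.Gamma β)⁻¹ *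
        (∫ t in Set.Ioi (0:ℝ), t ^ (β - 1) * Real.exp (-(C * t))
          * Real.exp (-(t * (hammingDistL p.1 p.2 : ℝ)))))
      = (Real.Gamma β)⁻¹ * (c p.1 * c p.2 *
        ∫ t in Set.Ioi (0:ℝ), t ^ (β - 1) * Real.exp (-(C * t))
          * Real.exp (-(t * (hammingDistL p.1 p.2 : ℝ)))) from by ring]
    congr 1
    exact (MeasureTheory.integral_const_mul _ _).symm
  have hpoint : ∀ t ∈ Set.Ioi (0:ℝ),
      (t ^ (β - 1) * Real.exp (-(C * t)) * (1 - Real.exp (-t)) ^ (X.length + 1))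
          * (c X) ^ 2
        ≤ ∑ p ∈ P, g p t := by
    intro t ht
    have ht0 : (0:ℝ) < t := ht
    have hq0 : 0 ≤ Real.exp (-t) := (Real.exp_pos _).le
    have hq1 : Real.exp (-t) ≤ 1 := Real.exp_le_one_iff.2 (by linarith)
    have hwnn : 0 ≤ w t := by rw [hw]; positivity
    have hsum : ∑ p ∈ P, g p t = w t * expQ (Real.exp (-t)) N c := by
      have e1 : expQ (Real.exp (-t)) N c
          = ∑ p ∈ P, c p.1 * c p.2 * Real.exp (-t) ^ hammingDistL p.1 p.2 :=
        (Finset.sum_product' SN SN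
          fun Y Z => c Y * c Z * Real.exp (-t) ^ hammingDistL Y Z).symm
      rw [e1, Finset.mul_sum]
      refine Finset.sum_congr rfl fun p _ => ?_
      have hqd : Real.exp (-(t * (hammingDistL p.1 p.2 : ℝ)))
          = Real.exp (-t) ^ (hammingDistL p.1 p.2) := by
        rw [← Real.exp_nat_mul]
        congr 1
        ring
      simp only [hg, hw]
      rw [hqd]
      ring
    rw [hsum]
    have hkey := (expQ_key (Real.exp (-t)) hq0 hq1 N).2 c X hX
    calc w t * ((1 - Real.exp (-t)) ^ (X.length + 1)) * (c X) ^ 2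
        = w t * ((1 - Real.exp (-t)) ^ (X.length + 1) * (c X) ^ 2) := by ring
      _ ≤ w t * expQ (Real.exp (-t)) N c := mul_le_mul_of_nonneg_left hkey hwnn
  have hlow_int : MeasureTheory.Integrable
      (fun t => (t ^ (β - 1) * Real.exp (-(C * t))
        * (1 - Real.exp (-t)) ^ (X.length + 1)) * (c X) ^ 2)
      (MeasureTheory.volume.restrict (Set.Ioi (0:ℝ))) :=
    (integrable_lower hC hβ X.length).mul_const _
  have hF_int : MeasureTheory.Integrable (fun t => ∑ p ∈ P, g p t)
      (MeasureTheory.volume.restrict (Set.Ioi (0:ℝ))) :=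
    MeasureTheory.integrable_finset_sum _ hint
  have hmono := MeasureTheory.setIntegral_mono_on hlow_int hF_int
    measurableSet_Ioi hpoint
  have heps : eps C β X.length * (c X) ^ 2
      = (Real.Gamma β)⁻¹ * ∫ t in Set.Ioi (0:ℝ),
          (t ^ (β - 1) * Real.exp (-(C * t))
            * (1 - Real.exp (-t)) ^ (X.length + 1)) * (c X) ^ 2 := by
    rw [MeasureTheory.integral_mul_const, eps]
    ring
  rw [hflat, hrepr, heps]
  exact mul_le_mul_of_nonneg_left hmono hΓ

end IMQAux


/-- **The inverse multiquadric Hamming kernel has discrete masses.**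
For `C, β > 0`, the kernel `k(X,Y) = (C + d_H(X,Y))^{-β}` on finite strings is
positive semi-definite and, for any RKHS representation `(H, φ)` with dense span,
has discrete masses.  Moreover it is a mixture over bandwidths of exponential
Hamming kernels: `(C + d)^{-β} = Γ(β)⁻¹ ∫₀^∞ λ^{β-1} e^{-Cλ} e^{-λ d} dλ`. -/
theorem imq_hamming_kernel_discrete_masses
    {B : Type*} [Fintype B] [DecidableEq B]
    (C β : ℝ) (hC : 0 < C) (hβ : 0 < β)
    (k : List B → List B → ℝ)
    (hk : ∀ X Y : List B, k X Y = (C + (hammingDistL X Y : ℝ)) ^ (-β))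
    {H : Type*} [NormedAddCommGroup H] [InnerProductSpace ℝ H] [CompleteSpace H]
    (φ : List B → H)
    (hrepr : ∀ X Y : List B, ⟪φ X, φ Y⟫ = k X Y)
    (hdense : Dense (Submodule.span ℝ (Set.range φ) : Set H)) :
    (∀ (T : Finset (List B)) (α : List B → ℝ),
      0 ≤ ∑ X ∈ T, ∑ Y ∈ T, α X * α Y * k X Y) ∧
    (∀ X : List B, ∃ d : H, ∀ Y : List B, ⟪d, φ Y⟫ = if Y = X then 1 else 0) ∧
    (∀ d : ℕ, (C + (d : ℝ)) ^ (-β) =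
      (Real.Gamma β)⁻¹ *
        ∫ t in Set.Ioi (0 : ℝ),
          t ^ (β - 1) * Real.exp (-(C * t)) * Real.exp (-(t * (d : ℝ)))) := by
  classical
  have expand : ∀ (T : Finset (List B)) (c : List B → ℝ),
      ⟪∑ Y ∈ T, c Y • φ Y, ∑ Z ∈ T, c Z • φ Z⟫
        = ∑ Y ∈ T, ∑ Z ∈ T, c Y * c Z * k Y Z := by
    intro T c
    rw [sum_inner]
    refine Finset.sum_congr rfl fun Y _ => ?_
    rw [inner_sum]
    refine Finset.sum_congr rfl fun Z _ => ?_
    rw [real_inner_smul_left, real_inner_smul_right, hrepr]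
    ring
  refine ⟨?_, ?_, fun d => IMQAux.gamma_repr hC hβ d⟩
  · intro T α
    have h := real_inner_self_nonneg (x := ∑ Y ∈ T, α Y • φ Y)
    rwa [expand T α] at h
  · intro X
    have hεpos : 0 < IMQAux.eps C β X.length := IMQAux.eps_pos hC hβ X.length
    -- the span of the kernel features avoiding `X` stays at distance `√ε` from `φ X`
    have key : ∀ w ∈ Submodule.span ℝ (φ '' {Y : List B | Y ≠ X}),
        IMQAux.eps C β X.length ≤ ‖φ X - w‖ ^ 2 := by
      intro w hw
      rw [Finsupp.mem_span_image_iff_linearCombination] at hw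
      obtain ⟨l, hl, rfl⟩ := hw
      rw [Finsupp.mem_supported] at hl
      have hXns : X ∉ l.support := fun h => (hl h) rfl
      have hsum : φ X - Finsupp.linearCombination ℝ φ l
          = ∑ Y ∈ insert X l.support, (if Y = X then 1 else -(l Y)) • φ Y := by
        rw [Finset.sum_insert hXns, if_pos rfl, one_smul, Finsupp.linearCombination_apply,
          Finsupp.sum, sub_eq_add_neg, ← Finset.sum_neg_distrib]
        congr 1
        refine Finset.sum_congr rfl fun Y hY => ?_
        have hYX : Y ≠ X := fun h => hXns (h ▸ hY)
        rw [if_neg hYX, neg_smul]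
      rw [hsum, ← real_inner_self_eq_norm_sq,
        expand (insert X l.support) (fun Y => if Y = X then 1 else -(l Y))]
      set T : Finset (List B) := insert X l.support with hT
      set u : List B → ℝ := fun Y => if Y = X then 1 else -(l Y) with hu
      set c : List B → ℝ := fun Y => if Y ∈ T then u Y else 0 with hc
      set N : ℕ := T.sup List.length with hN
      have hsub : T ⊆ IMQAux.stringsLE (B := B) N := fun Y hY =>
        IMQAux.mem_stringsLE.2 (Finset.le_sup hY)
      have hXT : X ∈ T := Finset.mem_insert_self _ _
      have big : ∑ Y ∈ T, ∑ Z ∈ T, u Y * u Z * k Y Z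
          = ∑ Y ∈ IMQAux.stringsLE (B := B) N, ∑ Z ∈ IMQAux.stringsLE (B := B) N,
              c Y * c Z * (C + (hammingDistL Y Z : ℝ)) ^ (-β) := by
        have step1 : ∑ Y ∈ T, ∑ Z ∈ T, u Y * u Z * k Y Z
            = ∑ Y ∈ T, ∑ Z ∈ T, c Y * c Z * (C + (hammingDistL Y Z : ℝ)) ^ (-β) :=
          Finset.sum_congr rfl fun Y hY => Finset.sum_congr rfl fun Z hZ => by
            rw [hk, hc]
            simp only [if_pos hY, if_pos hZ]
        rw [step1]
        calc ∑ Y ∈ T, ∑ Z ∈ T, c Y * c Z * (C + (hammingDistL Y Z : ℝ)) ^ (-β)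
            = ∑ Y ∈ T, ∑ Z ∈ IMQAux.stringsLE (B := B) N,
                c Y * c Z * (C + (hammingDistL Y Z : ℝ)) ^ (-β) :=
              Finset.sum_congr rfl fun Y _ =>
                Finset.sum_subset hsub fun Z _ hZT => by
                  rw [hc]; simp only [if_neg hZT]; ring
          _ = ∑ Y ∈ IMQAux.stringsLE (B := B) N, ∑ Z ∈ IMQAux.stringsLE (B := B) N,
                c Y * c Z * (C + (hammingDistL Y Z : ℝ)) ^ (-β) :=
              Finset.sum_subset hsub fun Y _ hYT =>
                Finset.sum_eq_zero fun Z _ => by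
                  rw [hc]; simp only [if_neg hYT]; ring
      rw [big]
      have hcX : c X = 1 := by rw [hc]; simp only [if_pos hXT, hu, if_pos rfl]
      have := IMQAux.quad_lower hC hβ N c X (hsub hXT)
      rw [hcX] at this
      simpa using this
    set U : Submodule ℝ H := Submodule.span ℝ (φ '' {Y : List B | Y ≠ X}) with hU
    set K : Submodule ℝ H := U.topologicalClosure with hK
    haveI : CompleteSpace K := IsClosed.completeSpace_coe (hs := U.isClosed_topologicalClosure)
    have keyK : ∀ w ∈ K, IMQAux.eps C β X.length ≤ ‖φ X - w‖ ^ 2 := by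
      intro w hwK
      have hwcl : w ∈ closure (U : Set H) := by
        rw [← Submodule.topologicalClosure_coe]
        exact hwK
      have hclosed : IsClosed {w : H | IMQAux.eps C β X.length ≤ ‖φ X - w‖ ^ 2} :=
        isClosed_le continuous_const (((continuous_const.sub continuous_id).norm).pow 2)
      exact closure_minimal (fun v hv => key v hv) hclosed hwcl
    set p : H := (K.orthogonalProjectionOnto (φ X) : H) with hp
    have hpK : p ∈ K := SetLike.coe_mem _
    set d0 : H := φ X - p with hd0
    have hd0orth : d0 ∈ Kᗮ := K.sub_starProjection_mem_orthogonal (φ X)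
    have hnorm : IMQAux.eps C β X.length ≤ ‖d0‖ ^ 2 := keyK p hpK
    have hd0pos : (0 : ℝ) < ‖d0‖ ^ 2 := lt_of_lt_of_le hεpos hnorm
    refine ⟨(‖d0‖ ^ 2)⁻¹ • d0, fun Y => ?_⟩
    rw [real_inner_smul_left]
    by_cases hYX : Y = X
    · have h1 : ⟪d0, p⟫ = 0 := by
        rw [real_inner_comm]
        exact (Submodule.mem_orthogonal K d0).1 hd0orth p hpK
      have h2 : ⟪d0, φ X⟫ = ‖d0‖ ^ 2 := by
        have h3 : φ X = d0 + p := by rw [hd0]; abel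
        rw [h3, inner_add_right, h1, real_inner_self_eq_norm_sq, add_zero]
      rw [hYX, h2, if_pos rfl, inv_mul_cancel₀ hd0pos.ne']
    · have hmem : φ Y ∈ K := by
        refine Submodule.le_topologicalClosure U ?_
        exact Submodule.subset_span (Set.mem_image_of_mem φ hYX)
      have h0 : ⟪d0, φ Y⟫ = 0 := by
        rw [real_inner_comm]
        exact (Submodule.mem_orthogonal K d0).1 hd0orth (φ Y) hmem
      rw [h0, if_neg hYX, mul_zero]
end

section
/- Let F : S → ℝ^D be an injective embedding of a countably infinite set S, and k_E(z, z') = Ψ(z − z') a translation-invariant kernel where Ψ is positive, continuous, and has a strictly positive Fourier transform. Define k(X,Y) = Ψ(F(X) − F(Y)). Then k is characteristic on S: if μ and ν are finitely supported probability distributions on S with equal kernel mean embeddings in H_k (equivalently MMD_k(μ,ν) = 0), then μ = ν. Conversely, if F is not injective, k is not characteristic. -/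
open scoped FourierTransform

open MeasureTheory Complex Real FourierTransform RealInnerProductSpace

variable {D : ℕ}

lemma mulFormula {f g : EuclideanSpace ℝ (Fin D) → ℂ}
    (hf : Integrable f) (hg : Integrable g) :
    ∫ ξ, 𝓕 f ξ * g ξ = ∫ x, f x * 𝓕 g x := by
  have h := VectorFourier.integral_bilin_fourierIntegral_eq_flip
    (E := ℂ) (F := ℂ) (G := ℂ) (μ := volume) (ν := volume)
    (L := innerₗ (EuclideanSpace ℝ (Fin D))) (ContinuousLinearMap.mul ℂ ℂ)
    Real.continuous_fourierChar
    (by exact continuous_inner) hf hg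
  simp only [flip_innerₗ] at h
  exact h

lemma gaussFT {t : ℝ} (ht : 0 < t) (w : EuclideanSpace ℝ (Fin D)) :
    𝓕 (fun v : EuclideanSpace ℝ (Fin D) => ((rexp (-(π * t) * ‖v‖ ^ 2) : ℝ) : ℂ)) w
      = (((1/t) ^ ((D : ℝ)/2) * rexp (-π * ‖w‖ ^ 2 / t) : ℝ) : ℂ) := by
  have hπt : (0:ℝ) < π * t := mul_pos Real.pi_pos ht
  have h := fourier_gaussian_innerProductSpace (V := EuclideanSpace ℝ (Fin D))
    (b := (π * t : ℝ)) (by simpa using hπt) w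
  have heq : (fun v : EuclideanSpace ℝ (Fin D) => ((rexp (-(π * t) * ‖v‖ ^ 2) : ℝ) : ℂ))
      = fun v : EuclideanSpace ℝ (Fin D) => Complex.exp (-(π * t : ℝ) * ‖v‖ ^ 2) := by
    ext v
    rw [show (-(↑(π * t)) * (‖v‖:ℂ) ^ 2) = (((-(π * t) * ‖v‖ ^ 2 : ℝ)) : ℂ) by push_cast; ring,
      ← Complex.ofReal_exp]
  have hD : (Module.finrank ℝ (EuclideanSpace ℝ (Fin D)) : ℂ) = (D : ℂ) := by
    simp [finrank_euclideanSpace]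
  have h1 : ((π : ℂ) / (π * t : ℝ)) = ((1/t : ℝ) : ℂ) := by
    push_cast
    rw [div_eq_div_iff (by exact_mod_cast hπt.ne') (by exact_mod_cast ht.ne')]
    ring
  have h2 : (-(π:ℂ) ^ 2 * (‖w‖:ℂ) ^ 2 / (π * t : ℝ)) = ((-π * ‖w‖^2 / t : ℝ) : ℂ) := by
    push_cast
    rw [div_eq_div_iff (by exact_mod_cast hπt.ne') (by exact_mod_cast ht.ne')]
    ring
  rw [heq, h, hD, h1, h2, ← Complex.ofReal_exp,
    show ((D:ℂ)/2) = (((D:ℝ)/2 : ℝ) : ℂ) by push_cast; ring,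
    ← Complex.ofReal_cpow (by positivity), ← Complex.ofReal_mul]


lemma gaussIntR {b : ℝ} (hb : 0 < b) :
    Integrable (fun v : EuclideanSpace ℝ (Fin D) => rexp (-b * ‖v‖ ^ 2)) := by
  have h := (GaussianFourier.integrable_cexp_neg_mul_sq_norm_add (V := EuclideanSpace ℝ (Fin D))
    (b := (b:ℂ)) (by simpa using hb) 0 0).norm
  have heq : ∀ v : EuclideanSpace ℝ (Fin D),
      ‖cexp (-(b:ℂ) * ‖v‖ ^ 2 + 0 * ⟪(0 : EuclideanSpace ℝ (Fin D)), v⟫)‖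
        = rexp (-b * ‖v‖ ^ 2) := by
    intro v
    rw [Complex.norm_exp]
    have : (-(b:ℂ) * ‖v‖ ^ 2 + 0 * ⟪(0 : EuclideanSpace ℝ (Fin D)), v⟫)
        = ((-b * ‖v‖ ^ 2 : ℝ) : ℂ) := by push_cast; ring
    rw [this, Complex.ofReal_re]
  exact h.congr (Filter.Eventually.of_forall heq)

lemma fourierCont {f : EuclideanSpace ℝ (Fin D) → ℂ} (hf : Integrable f) :
    Continuous (𝓕 f) :=
  VectorFourier.fourierIntegral_continuous Real.continuous_fourierChar
    (by exact continuous_inner) hf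

lemma fourierBdd {f : EuclideanSpace ℝ (Fin D) → ℂ} (hf : Integrable f) (w : EuclideanSpace ℝ (Fin D)) :
    ‖𝓕 f w‖ ≤ ∫ v, ‖f v‖ :=
  VectorFourier.norm_fourierIntegral_le_integral_norm _ _ _ _ _

lemma keyId (Ψ : EuclideanSpace ℝ (Fin D) → ℝ) (hΨint : Integrable Ψ)
    {t : ℝ} (ht : 0 < t) :
    ∫ ξ, (𝓕 (fun z : EuclideanSpace ℝ (Fin D) => (Ψ z : ℂ)) ξ).re * rexp (-(π * t) * ‖ξ‖ ^ 2)
      = ∫ y : EuclideanSpace ℝ (Fin D), Ψ y * ((1/t) ^ ((D:ℝ)/2) * rexp (-π * ‖y‖ ^ 2 / t)) := by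
  have hΨc : Integrable (fun z : EuclideanSpace ℝ (Fin D) => (Ψ z : ℂ)) := hΨint.ofReal
  have hgR := gaussIntR (D := D) (mul_pos pi_pos ht)
  have hg : Integrable (fun v : EuclideanSpace ℝ (Fin D) => ((rexp (-(π*t) * ‖v‖^2) : ℝ) : ℂ)) :=
    hgR.ofReal
  have h := mulFormula hΨc hg
  have hR : ∫ x, (Ψ x : ℂ) * 𝓕 (fun v : EuclideanSpace ℝ (Fin D) => ((rexp (-(π*t) * ‖v‖^2) : ℝ) : ℂ)) x
      = ((∫ y : EuclideanSpace ℝ (Fin D), Ψ y * ((1/t) ^ ((D:ℝ)/2) * rexp (-π * ‖y‖ ^ 2 / t)) : ℝ) : ℂ) := by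
    rw [show ((∫ y : EuclideanSpace ℝ (Fin D), Ψ y * ((1/t) ^ ((D:ℝ)/2) * rexp (-π * ‖y‖ ^ 2 / t)) : ℝ) : ℂ)
        = ∫ y : EuclideanSpace ℝ (Fin D), ((Ψ y * ((1/t) ^ ((D:ℝ)/2) * rexp (-π * ‖y‖ ^ 2 / t)) : ℝ) : ℂ)
      from (integral_ofReal (𝕜 := ℂ)).symm]
    apply integral_congr_ae
    filter_upwards with x
    rw [gaussFT ht x]
    push_cast
    ring
  rw [hR] at h
  have hbdd : ∃ C, ∀ ξ, ‖𝓕 (fun z : EuclideanSpace ℝ (Fin D) => (Ψ z : ℂ)) ξ‖ ≤ C :=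
    ⟨∫ v : EuclideanSpace ℝ (Fin D), ‖(Ψ v : ℂ)‖, fun ξ => fourierBdd hΨc ξ⟩
  have hint1 : Integrable (fun ξ : EuclideanSpace ℝ (Fin D) =>
      𝓕 (fun z : EuclideanSpace ℝ (Fin D) => (Ψ z : ℂ)) ξ * ((rexp (-(π*t) * ‖ξ‖^2) : ℝ) : ℂ)) :=
    hg.bdd_mul (fourierCont hΨc).aestronglyMeasurable (Filter.Eventually.of_forall hbdd.choose_spec)
  have h2 := integral_re hint1
  simp only [RCLike.re_to_complex] at h2
  calc ∫ ξ, (𝓕 (fun z : EuclideanSpace ℝ (Fin D) => (Ψ z : ℂ)) ξ).re * rexp (-(π * t) * ‖ξ‖ ^ 2)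
      = ∫ ξ, (𝓕 (fun z : EuclideanSpace ℝ (Fin D) => (Ψ z : ℂ)) ξ * ((rexp (-(π*t) * ‖ξ‖^2) : ℝ) : ℂ)).re := by
        apply integral_congr_ae
        filter_upwards with ξ
        rw [Complex.mul_re, Complex.ofReal_re, Complex.ofReal_im]
        ring
    _ = (∫ ξ, 𝓕 (fun z : EuclideanSpace ℝ (Fin D) => (Ψ z : ℂ)) ξ * ((rexp (-(π*t) * ‖ξ‖^2) : ℝ) : ℂ)).re := h2
    _ = ∫ y : EuclideanSpace ℝ (Fin D), Ψ y * ((1/t) ^ ((D:ℝ)/2) * rexp (-π * ‖y‖ ^ 2 / t)) := by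
        rw [h, Complex.ofReal_re]

lemma gaussTotal {t : ℝ} (ht : 0 < t) :
    ∫ y : EuclideanSpace ℝ (Fin D), (1/t) ^ ((D:ℝ)/2) * rexp (-π * ‖y‖ ^ 2 / t) = 1 := by
  have h1 : ∀ y : EuclideanSpace ℝ (Fin D),
      rexp (-π * ‖y‖ ^ 2 / t) = rexp (-(π/t) * ‖y‖ ^ 2) := by
    intro y; congr 1; ring
  simp_rw [h1, integral_const_mul]
  rw [GaussianFourier.integral_rexp_neg_mul_sq_norm (div_pos pi_pos ht)]
  rw [show π / (π / t) = t by field_simp]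
  rw [finrank_euclideanSpace, Fintype.card_fin]
  rw [← Real.mul_rpow (by positivity) ht.le]
  rw [one_div, inv_mul_cancel₀ ht.ne', Real.one_rpow]

lemma gaussKInt {t : ℝ} (ht : 0 < t) :
    Integrable (fun y : EuclideanSpace ℝ (Fin D) => (1/t) ^ ((D:ℝ)/2) * rexp (-π * ‖y‖ ^ 2 / t)) := by
  apply Integrable.const_mul
  apply (gaussIntR (div_pos pi_pos ht)).congr
  filter_upwards with y
  congr 1; ring

lemma expPowBound {x : ℝ} (hx : 0 ≤ x) (n : ℕ) : x ^ n / n.factorial ≤ rexp x := by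
  calc x ^ n / n.factorial ≤ ∑ i ∈ Finset.range (n+1), x ^ i / i.factorial := by
        exact Finset.single_le_sum (f := fun i => x ^ i / (i.factorial : ℝ))
          (fun i _ => by positivity) (Finset.self_mem_range_succ n)
    _ ≤ rexp x := Real.sum_le_exp_of_nonneg hx (n+1)

lemma kernelTailBound {t : ℝ} (ht : 0 < t) (ht1 : t ≤ 1) {y : EuclideanSpace ℝ (Fin D)}
    (hy : 1 ≤ ‖y‖) :
    (1/t) ^ ((D:ℝ)/2) * rexp (-π * ‖y‖ ^ 2 / t) ≤ (D.factorial : ℝ) / π ^ D := by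
  have h1t : (1:ℝ) ≤ 1/t := (le_div_iff₀ ht).2 (by linarith)
  have hy2 : (1:ℝ) ≤ ‖y‖ ^ 2 := by nlinarith
  have h1 : rexp (-π * ‖y‖ ^ 2 / t) ≤ rexp (-(π / t)) := by
    apply Real.exp_le_exp.2
    rw [neg_mul, neg_div, neg_le_neg_iff, div_le_div_iff_of_pos_right ht]
    nlinarith [pi_pos]
  have h2 : (1/t) ^ ((D:ℝ)/2) ≤ (1/t) ^ (D:ℕ) := by
    rw [← Real.rpow_natCast (1/t) D]
    apply Real.rpow_le_rpow_of_exponent_le h1t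
    rw [div_le_iff₀ (by norm_num : (0:ℝ) < 2)]
    nlinarith [Nat.cast_nonneg (α := ℝ) D]
  have hppos : (0:ℝ) < (π/t) ^ D / D.factorial := by positivity
  have h3 : rexp (-(π/t)) ≤ (D.factorial : ℝ) * (t/π) ^ D := by
    have hexp := expPowBound (le_of_lt (div_pos pi_pos ht)) D
    calc rexp (-(π/t)) = (rexp (π/t))⁻¹ := by rw [Real.exp_neg]
      _ ≤ ((π/t) ^ D / D.factorial)⁻¹ := by
          exact inv_anti₀ hppos hexp
      _ = (D.factorial : ℝ) * (t/π) ^ D := by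
          rw [inv_div, div_eq_mul_inv, ← inv_pow, inv_div]
  calc (1/t) ^ ((D:ℝ)/2) * rexp (-π * ‖y‖ ^ 2 / t)
      ≤ (1/t) ^ (D:ℕ) * ((D.factorial : ℝ) * (t/π) ^ D) := by
        apply mul_le_mul h2 (h1.trans h3) (Real.exp_pos _).le (by positivity)
    _ = (D.factorial : ℝ) * ((1/t) * (t/π)) ^ D := by rw [mul_pow]; ring
    _ = (D.factorial : ℝ) / π ^ D := by
        rw [show (1/t) * (t/π) = 1/π by field_simp, div_pow, one_pow, mul_one_div]

lemma Jbound (Ψ : EuclideanSpace ℝ (Fin D) → ℝ) (hΨpos : ∀ z, 0 < Ψ z)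
    (hΨcont : Continuous Ψ) (hΨint : Integrable Ψ) {M : ℝ}
    (hM : ∀ y ∈ Metric.closedBall (0 : EuclideanSpace ℝ (Fin D)) 1, Ψ y ≤ M)
    {t : ℝ} (ht : 0 < t) (ht1 : t ≤ 1) :
    ∫ y : EuclideanSpace ℝ (Fin D), Ψ y * ((1/t) ^ ((D:ℝ)/2) * rexp (-π * ‖y‖ ^ 2 / t))
      ≤ M + ((D.factorial : ℝ) / π ^ D) * ∫ y, Ψ y := by
  set K : EuclideanSpace ℝ (Fin D) → ℝ :=
    fun y => (1/t) ^ ((D:ℝ)/2) * rexp (-π * ‖y‖ ^ 2 / t) with hK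
  have hM0 : 0 ≤ M := le_trans (hΨpos 0).le (hM 0 (by simp))
  have hKnonneg : ∀ y, 0 ≤ K y := fun y => by positivity
  have hKint : Integrable K := gaussKInt ht
  have hKbd : ∃ C, ∀ y, ‖K y‖ ≤ C := by
    refine ⟨(1/t) ^ ((D:ℝ)/2), fun y => ?_⟩
    rw [Real.norm_eq_abs, _root_.abs_of_nonneg (hKnonneg y)]
    calc K y ≤ (1/t) ^ ((D:ℝ)/2) * 1 := by
          apply mul_le_mul_of_nonneg_left _ (by positivity)
          exact Real.exp_le_one_iff.2 (by rw [neg_mul, neg_div]; exact neg_nonpos.2 (by positivity))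
      _ = (1/t) ^ ((D:ℝ)/2) := mul_one _
  have hint : Integrable (fun y => Ψ y * K y) := by
    have h := hΨint.bdd_mul hKint.aestronglyMeasurable (Filter.Eventually.of_forall hKbd.choose_spec)
    exact h.congr (Filter.Eventually.of_forall fun y => mul_comm _ _)
  have htot : ∫ y, K y = 1 := gaussTotal ht
  have hsplit := (integral_add_compl (μ := volume)
    (measurableSet_closedBall (x := (0 : EuclideanSpace ℝ (Fin D))) (ε := 1)) hint).symm
  have h1 : ∫ y in Metric.closedBall (0 : EuclideanSpace ℝ (Fin D)) 1, Ψ y * K y ≤ M := by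
    calc ∫ y in Metric.closedBall (0 : EuclideanSpace ℝ (Fin D)) 1, Ψ y * K y
        ≤ ∫ y in Metric.closedBall (0 : EuclideanSpace ℝ (Fin D)) 1, M * K y := by
          apply setIntegral_mono_on hint.integrableOn ((hKint.const_mul M).integrableOn)
            measurableSet_closedBall
          intro y hy
          exact mul_le_mul_of_nonneg_right (hM y hy) (hKnonneg y)
      _ = M * ∫ y in Metric.closedBall (0 : EuclideanSpace ℝ (Fin D)) 1, K y := by
          rw [integral_const_mul]
      _ ≤ M * ∫ y, K y := by
          apply mul_le_mul_of_nonneg_left _ hM0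
          exact setIntegral_le_integral hKint (Filter.Eventually.of_forall hKnonneg)
      _ = M := by rw [htot, mul_one]
  have h2 : ∫ y in (Metric.closedBall (0 : EuclideanSpace ℝ (Fin D)) 1)ᶜ, Ψ y * K y
      ≤ ((D.factorial : ℝ) / π ^ D) * ∫ y, Ψ y := by
    calc ∫ y in (Metric.closedBall (0 : EuclideanSpace ℝ (Fin D)) 1)ᶜ, Ψ y * K y
        ≤ ∫ y in (Metric.closedBall (0 : EuclideanSpace ℝ (Fin D)) 1)ᶜ,
            ((D.factorial : ℝ) / π ^ D) * Ψ y := by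
          apply setIntegral_mono_on hint.integrableOn ((hΨint.const_mul _).integrableOn)
            measurableSet_closedBall.compl
          intro y hy
          have hy1 : 1 ≤ ‖y‖ := by
            simp only [Set.mem_compl_iff, Metric.mem_closedBall, dist_zero_right, not_le] at hy
            linarith
          calc Ψ y * K y ≤ Ψ y * ((D.factorial : ℝ) / π ^ D) :=
                mul_le_mul_of_nonneg_left (kernelTailBound ht ht1 hy1) (hΨpos y).le
            _ = ((D.factorial : ℝ) / π ^ D) * Ψ y := mul_comm _ _
      _ = ((D.factorial : ℝ) / π ^ D) *
          ∫ y in (Metric.closedBall (0 : EuclideanSpace ℝ (Fin D)) 1)ᶜ, Ψ y := by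
          rw [integral_const_mul]
      _ ≤ ((D.factorial : ℝ) / π ^ D) * ∫ y, Ψ y := by
          apply mul_le_mul_of_nonneg_left _ (by positivity)
          exact setIntegral_le_integral hΨint (Filter.Eventually.of_forall fun y => (hΨpos y).le)
  calc ∫ y : EuclideanSpace ℝ (Fin D), Ψ y * K y
      = (∫ y in Metric.closedBall (0 : EuclideanSpace ℝ (Fin D)) 1, Ψ y * K y)
        + ∫ y in (Metric.closedBall (0 : EuclideanSpace ℝ (Fin D)) 1)ᶜ, Ψ y * K y := hsplit
    _ ≤ M + ((D.factorial : ℝ) / π ^ D) * ∫ y, Ψ y := add_le_add h1 h2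

lemma ftIntegrable (Ψ : EuclideanSpace ℝ (Fin D) → ℝ) (hΨpos : ∀ z, 0 < Ψ z)
    (hΨcont : Continuous Ψ) (hΨint : Integrable Ψ)
    (hΨfour : ∀ ξ : EuclideanSpace ℝ (Fin D),
      0 < (𝓕 (fun z => (Ψ z : ℂ)) ξ).re ∧ (𝓕 (fun z => (Ψ z : ℂ)) ξ).im = 0) :
    Integrable (𝓕 (fun z : EuclideanSpace ℝ (Fin D) => (Ψ z : ℂ))) := by
  have hΨc : Integrable (fun z : EuclideanSpace ℝ (Fin D) => (Ψ z : ℂ)) := hΨint.ofReal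
  set W : EuclideanSpace ℝ (Fin D) → ℝ :=
    fun ξ => (𝓕 (fun z : EuclideanSpace ℝ (Fin D) => (Ψ z : ℂ)) ξ).re with hW
  have hWcont : Continuous W := Complex.continuous_re.comp (fourierCont hΨc)
  -- a uniform bound on the mollified integrals
  obtain ⟨M, hM⟩ : ∃ M, ∀ y ∈ Metric.closedBall (0 : EuclideanSpace ℝ (Fin D)) 1, Ψ y ≤ M := by
    obtain ⟨C, hC⟩ := (isCompact_closedBall (0 : EuclideanSpace ℝ (Fin D)) 1).exists_bound_of_continuousOn
      hΨcont.continuousOn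
    exact ⟨C, fun y hy => (le_abs_self _).trans ((Real.norm_eq_abs _ ▸ hC y hy))⟩
  set B : ℝ := M + ((D.factorial : ℝ) / π ^ D) * ∫ y, Ψ y with hB
  have hbound : ∀ n : ℕ,
      ∫ ξ, W ξ * rexp (-(π * (1/(n+1))) * ‖ξ‖ ^ 2) ≤ B := by
    intro n
    have ht : (0:ℝ) < 1/(n+1) := by positivity
    have ht1 : (1:ℝ)/(n+1) ≤ 1 := by
      rw [div_le_one (by positivity)]
      simp
    rw [keyId Ψ hΨint ht]
    exact Jbound Ψ hΨpos hΨcont hΨint hM ht ht1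
  -- each mollified integrand is integrable
  have hWbd : ∃ C, ∀ ξ, ‖𝓕 (fun z : EuclideanSpace ℝ (Fin D) => (Ψ z : ℂ)) ξ‖ ≤ C :=
    ⟨∫ v : EuclideanSpace ℝ (Fin D), ‖(Ψ v : ℂ)‖, fun ξ => fourierBdd hΨc ξ⟩
  obtain ⟨C, hC⟩ := hWbd
  have hintn : ∀ n : ℕ, Integrable (fun ξ : EuclideanSpace ℝ (Fin D) =>
      W ξ * rexp (-(π * (1/(n+1))) * ‖ξ‖ ^ 2)) := by
    intro n
    have ht : (0:ℝ) < π * (1/(n+1)) := by positivity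
    have h := (gaussIntR (D := D) ht).bdd_mul hWcont.aestronglyMeasurable
      (Filter.Eventually.of_forall fun ξ => by
        rw [Real.norm_eq_abs]
        exact (Complex.abs_re_le_norm _).trans (hC ξ))
    exact h
  -- lintegral facts
  have hWpos : ∀ ξ, 0 < W ξ := fun ξ => (hΨfour ξ).1
  have hlin : ∀ n : ℕ, ∫⁻ ξ, ENNReal.ofReal (W ξ * rexp (-(π * (1/(n+1))) * ‖ξ‖ ^ 2))
      ≤ ENNReal.ofReal B := by
    intro n
    rw [← ofReal_integral_eq_lintegral_ofReal (hintn n)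
      (Filter.Eventually.of_forall fun ξ => mul_nonneg (hWpos ξ).le (Real.exp_nonneg _))]
    exact ENNReal.ofReal_le_ofReal (hbound n)
  -- monotone convergence
  set f : ℕ → EuclideanSpace ℝ (Fin D) → ENNReal :=
    fun n ξ => ENNReal.ofReal (W ξ * rexp (-(π * (1/(n+1))) * ‖ξ‖ ^ 2)) with hf
  have hmono : Monotone f := by
    intro m n hmn
    intro ξ
    apply ENNReal.ofReal_le_ofReal
    apply mul_le_mul_of_nonneg_left _ (hWpos ξ).le
    apply Real.exp_le_exp.2
    rw [neg_mul, neg_mul, neg_le_neg_iff]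
    apply mul_le_mul_of_nonneg_right _ (by positivity)
    apply mul_le_mul_of_nonneg_left _ pi_pos.le
    apply div_le_div_of_nonneg_left (by norm_num) (by positivity)
    exact_mod_cast by exact_mod_cast Nat.succ_le_succ hmn
  have hsup : ∀ ξ, (⨆ n, f n ξ) = ENNReal.ofReal (W ξ) := by
    intro ξ
    have htend : Filter.Tendsto (fun n : ℕ => f n ξ) Filter.atTop
        (nhds (ENNReal.ofReal (W ξ))) := by
      apply ENNReal.tendsto_ofReal
      have : Filter.Tendsto (fun n : ℕ => -(π * (1/(n+1))) * ‖ξ‖ ^ 2) Filter.atTop (nhds 0) := by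
        have h0 : Filter.Tendsto (fun n : ℕ => (1:ℝ)/(n+1)) Filter.atTop (nhds 0) :=
          tendsto_one_div_add_atTop_nhds_zero_nat
        have := ((h0.const_mul π).neg.mul_const (‖ξ‖ ^ 2))
        simpa using this
      have := (Real.continuous_exp.continuousAt.tendsto.comp this)
      simp only [Real.exp_zero] at this
      simpa using (this.const_mul (W ξ))
    exact tendsto_nhds_unique (tendsto_atTop_iSup fun m n h => hmono h ξ) htend
  have hmeas : ∀ n, Measurable (f n) := by
    intro n
    apply Measurable.ennreal_ofReal
    exact (hWcont.mul (by continuity)).measurable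
  have hfin : ∫⁻ ξ, ENNReal.ofReal (W ξ) ≤ ENNReal.ofReal B := by
    rw [show (fun ξ : EuclideanSpace ℝ (Fin D) => ENNReal.ofReal (W ξ))
        = fun ξ => ⨆ n, f n ξ from funext fun ξ => (hsup ξ).symm]
    rw [lintegral_iSup hmeas hmono]
    exact iSup_le hlin
  refine ⟨(fourierCont hΨc).aestronglyMeasurable, ?_⟩
  rw [hasFiniteIntegral_iff_norm]
  have hnorm : ∀ ξ, ‖𝓕 (fun z : EuclideanSpace ℝ (Fin D) => (Ψ z : ℂ)) ξ‖ = W ξ := by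
    intro ξ
    have him := (hΨfour ξ).2
    have : 𝓕 (fun z : EuclideanSpace ℝ (Fin D) => (Ψ z : ℂ)) ξ = ((W ξ : ℝ) : ℂ) := by
      apply Complex.ext
      · simp [hW]
      · simpa using him
    rw [this, Complex.norm_real, Real.norm_eq_abs, _root_.abs_of_pos (hWpos ξ)]
  calc ∫⁻ ξ, ENNReal.ofReal ‖𝓕 (fun z : EuclideanSpace ℝ (Fin D) => (Ψ z : ℂ)) ξ‖
      = ∫⁻ ξ, ENNReal.ofReal (W ξ) := by
        apply lintegral_congr
        intro ξ
        rw [hnorm ξ]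
    _ ≤ ENNReal.ofReal B := hfin
    _ < ⊤ := ENNReal.ofReal_lt_top

noncomputable def expChar (x : EuclideanSpace ℝ (Fin D)) :
    Multiplicative (EuclideanSpace ℝ (Fin D)) →* ℂ where
  toFun ξ := Complex.exp (((2 * π * ⟪Multiplicative.toAdd ξ, x⟫ : ℝ) : ℂ) * Complex.I)
  map_one' := by
    have h : Multiplicative.toAdd (1 : Multiplicative (EuclideanSpace ℝ (Fin D)))
        = (0 : EuclideanSpace ℝ (Fin D)) := rfl
    show Complex.exp _ = 1
    rw [h]
    simp
  map_mul' ξ η := by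
    show Complex.exp _ = Complex.exp _ * Complex.exp _
    rw [← Complex.exp_add]
    congr 1
    have h2 : ⟪Multiplicative.toAdd (ξ * η), x⟫
        = ⟪Multiplicative.toAdd ξ, x⟫ + ⟪Multiplicative.toAdd η, x⟫ := by
      have h : Multiplicative.toAdd (ξ * η)
          = Multiplicative.toAdd ξ + Multiplicative.toAdd η := rfl
      rw [h, inner_add_left]
    rw [show ((2 * π * ⟪Multiplicative.toAdd (ξ * η), x⟫ : ℝ) : ℂ)
        = ((2 * π * ⟪Multiplicative.toAdd ξ, x⟫ : ℝ) : ℂ)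
          + ((2 * π * ⟪Multiplicative.toAdd η, x⟫ : ℝ) : ℂ) by
      rw [← Complex.ofReal_add]; congr 1; rw [h2]; ring]
    ring

lemma expChar_inj : Function.Injective (expChar (D := D)) := by
  intro x y h
  by_contra hxy
  have hne : x - y ≠ 0 := sub_ne_zero.2 hxy
  have hnorm : (0:ℝ) < ‖x - y‖ ^ 2 := by
    have := norm_pos_iff.mpr hne
    positivity
  set ξ0 : EuclideanSpace ℝ (Fin D) := ((2 * ‖x - y‖ ^ 2)⁻¹) • (x - y) with hξ0
  have h1 : expChar x (Multiplicative.ofAdd ξ0) = expChar y (Multiplicative.ofAdd ξ0) := by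
    rw [h]
  have hinner : ⟪ξ0, x⟫ - ⟪ξ0, y⟫ = 1/2 := by
    rw [← inner_sub_right, hξ0, real_inner_smul_left, real_inner_self_eq_norm_sq]
    field_simp
  simp only [expChar, MonoidHom.coe_mk, OneHom.coe_mk, toAdd_ofAdd] at h1
  rw [Complex.exp_eq_exp_iff_exists_int] at h1
  obtain ⟨n, hn⟩ := h1
  have hn2 : ((2 * π * ⟪ξ0, x⟫ : ℝ) : ℂ) * Complex.I
      = (((2 * π * ⟪ξ0, y⟫ : ℝ) : ℂ) + (n : ℂ) * (2 * (π : ℂ))) * Complex.I := by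
    rw [hn]; ring
  have hn3 := mul_right_cancel₀ Complex.I_ne_zero hn2
  have hn4 : (2 * π * ⟪ξ0, x⟫ : ℝ) = 2 * π * ⟪ξ0, y⟫ + (n:ℝ) * (2 * π) := by
    exact_mod_cast hn3
  have hπ : π ≠ 0 := pi_ne_zero
  have h6 : (n : ℝ) * (2 * π) = 2 * π * (⟪ξ0, x⟫ - ⟪ξ0, y⟫) := by
    rw [mul_sub]
    linarith [hn4]
  rw [hinner] at h6
  have h7 : (2 * (n:ℝ)) * π = 1 * π := by ring_nf; ring_nf at h6; linarith
  have h8 : (2 * (n:ℝ)) = 1 := mul_right_cancel₀ hπ h7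
  have : (2 * n : ℤ) = 1 := by exact_mod_cast h8
  omega
lemma charZero {ι : Type*} (s : Finset ι) (c : ι → ℝ) (z : ι → EuclideanSpace ℝ (Fin D))
    (hz : Set.InjOn z s)
    (hp : ∀ ξ : EuclideanSpace ℝ (Fin D),
      ∑ i ∈ s, (c i : ℂ) * Complex.exp (((2 * π * ⟪ξ, z i⟫ : ℝ) : ℂ) * Complex.I) = 0) :
    ∀ i ∈ s, c i = 0 := by
  have hinj : Function.Injective (fun i : ↥s => expChar (D := D) (z i)) := by
    intro i j hij
    have := expChar_inj hij
    exact Subtype.ext (hz i.2 j.2 this)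
  have li : LinearIndependent ℂ (fun i : ↥s =>
      ((expChar (D := D) (z i) : Multiplicative (EuclideanSpace ℝ (Fin D)) → ℂ))) :=
    (linearIndependent_monoidHom (Multiplicative (EuclideanSpace ℝ (Fin D))) ℂ).comp _ hinj
  have hsum : ∑ i : ↥s, (c i : ℂ) •
      ((expChar (D := D) (z i) : Multiplicative (EuclideanSpace ℝ (Fin D)) → ℂ)) = 0 := by
    funext ξ
    have := hp (Multiplicative.toAdd ξ)
    simp only [Finset.sum_apply, Pi.smul_apply, smul_eq_mul, Pi.zero_apply]
    rw [← Finset.sum_attach s (fun i => (c i : ℂ) * Complex.exp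
      (((2 * π * ⟪Multiplicative.toAdd ξ, z i⟫ : ℝ) : ℂ) * Complex.I))] at this
    simpa [expChar] using this
  intro i hi
  have := Fintype.linearIndependent_iff.mp li (fun i => (c i : ℂ)) hsum ⟨i, hi⟩
  exact_mod_cast this

lemma normExpI (θ : ℝ) : ‖Complex.exp ((θ : ℂ) * Complex.I)‖ = 1 := by
  rw [Complex.norm_exp]
  simp

lemma strictPD (Ψ : EuclideanSpace ℝ (Fin D) → ℝ)
    (hΨpos : ∀ z, 0 < Ψ z) (hΨcont : Continuous Ψ) (hΨint : Integrable Ψ)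
    (hΨfour : ∀ ξ : EuclideanSpace ℝ (Fin D),
      0 < (𝓕 (fun z => (Ψ z : ℂ)) ξ).re ∧ (𝓕 (fun z => (Ψ z : ℂ)) ξ).im = 0)
    {ι : Type*} (s : Finset ι) (c : ι → ℝ) (z : ι → EuclideanSpace ℝ (Fin D))
    (hz : Set.InjOn z ↑s)
    (hQ : ∑ i ∈ s, ∑ j ∈ s, c i * c j * Ψ (z i - z j) = 0) :
    ∀ i ∈ s, c i = 0 := by
  have hΨc : Integrable (fun v : EuclideanSpace ℝ (Fin D) => (Ψ v : ℂ)) := hΨint.ofReal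
  have hFT := ftIntegrable Ψ hΨpos hΨcont hΨint hΨfour
  have hcont : Continuous fun v : EuclideanSpace ℝ (Fin D) => (Ψ v : ℂ) :=
    Complex.continuous_ofReal.comp hΨcont
  have hinvF := hcont.fourierInv_fourier_eq hΨc hFT
  have hinv : ∀ w : EuclideanSpace ℝ (Fin D), ((Ψ w : ℂ))
      = ∫ ξ, Complex.exp (((2 * π * ⟪ξ, w⟫ : ℝ) : ℂ) * Complex.I)
          * 𝓕 (fun v : EuclideanSpace ℝ (Fin D) => (Ψ v : ℂ)) ξ := by
    intro w
    conv_lhs => rw [← congrFun hinvF w]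
    rw [Real.fourierInv_eq]
    apply integral_congr_ae; filter_upwards with ξ
    rw [Circle.smul_def, Real.fourierChar_apply, smul_eq_mul]
  set p : EuclideanSpace ℝ (Fin D) → ℂ :=
    fun ξ => ∑ i ∈ s, (c i : ℂ) * Complex.exp (((2 * π * ⟪ξ, z i⟫ : ℝ) : ℂ) * Complex.I) with hp
  have hpcont : Continuous p := by
    apply continuous_finset_sum
    intro i _
    exact continuous_const.mul (Complex.continuous_exp.comp
      ((Complex.continuous_ofReal.comp
        (continuous_const.mul (continuous_id.inner continuous_const))).mul continuous_const))
  have hpbd : ∀ ξ, ‖p ξ‖ ≤ ∑ i ∈ s, |c i| := by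
    intro ξ
    apply (norm_sum_le _ _).trans
    apply Finset.sum_le_sum
    intro i _
    rw [norm_mul, normExpI, mul_one, Complex.norm_real, Real.norm_eq_abs]
  have hterm : ∀ w : EuclideanSpace ℝ (Fin D),
      Integrable (fun ξ : EuclideanSpace ℝ (Fin D) =>
        Complex.exp (((2 * π * ⟪ξ, w⟫ : ℝ) : ℂ) * Complex.I)
          * 𝓕 (fun v : EuclideanSpace ℝ (Fin D) => (Ψ v : ℂ)) ξ) := by
    intro w
    apply hFT.bdd_mul
    · exact (Complex.continuous_exp.comp
        ((Complex.continuous_ofReal.comp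
          (continuous_const.mul (continuous_id.inner continuous_const))).mul
            continuous_const)).aestronglyMeasurable
    · exact Filter.Eventually.of_forall fun ξ => le_of_eq (normExpI _)
  have hptwise : ∀ ξ : EuclideanSpace ℝ (Fin D),
      ∑ q ∈ s ×ˢ s, ((c q.1 * c q.2 : ℝ) : ℂ)
        * Complex.exp (((2 * π * ⟪ξ, z q.1 - z q.2⟫ : ℝ) : ℂ) * Complex.I)
      = p ξ * (starRingEnd ℂ) (p ξ) := by
    intro ξ
    rw [hp, map_sum, Finset.sum_mul_sum, ← Finset.sum_product']
    apply Finset.sum_congr rfl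
    intro q hq
    rw [map_mul, Complex.conj_ofReal, ← Complex.exp_conj, map_mul, Complex.conj_I,
      Complex.conj_ofReal]
    rw [show ((c q.1 * c q.2 : ℝ) : ℂ) = (c q.1 : ℂ) * (c q.2 : ℂ) by push_cast; ring,
      show (((2 * π * ⟪ξ, z q.1 - z q.2⟫ : ℝ) : ℂ) * Complex.I)
          = ((2 * π * ⟪ξ, z q.1⟫ : ℝ) : ℂ) * Complex.I
            + ((2 * π * ⟪ξ, z q.2⟫ : ℝ) : ℂ) * -Complex.I by
        rw [inner_sub_right]; push_cast; ring,
      Complex.exp_add]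
    ring
  -- Q as a complex integral
  have hQC2 : (∫ ξ, p ξ * (starRingEnd ℂ) (p ξ)
      * 𝓕 (fun v : EuclideanSpace ℝ (Fin D) => (Ψ v : ℂ)) ξ) = 0 := by
    have hs : ∑ q ∈ s ×ˢ s, ((c q.1 * c q.2 : ℝ) : ℂ) * (Ψ (z q.1 - z q.2) : ℂ) = 0 := by
      rw [Finset.sum_product' (f := fun i j => ((c i * c j : ℝ) : ℂ) * (Ψ (z i - z j) : ℂ))]
      exact_mod_cast hQ
    calc (∫ ξ, p ξ * (starRingEnd ℂ) (p ξ)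
          * 𝓕 (fun v : EuclideanSpace ℝ (Fin D) => (Ψ v : ℂ)) ξ)
        = ∫ ξ, ∑ q ∈ s ×ˢ s, ((c q.1 * c q.2 : ℝ) : ℂ)
            * (Complex.exp (((2 * π * ⟪ξ, z q.1 - z q.2⟫ : ℝ) : ℂ) * Complex.I)
              * 𝓕 (fun v : EuclideanSpace ℝ (Fin D) => (Ψ v : ℂ)) ξ) := by
          apply integral_congr_ae
          filter_upwards with ξ
          rw [← hptwise ξ, Finset.sum_mul]
          apply Finset.sum_congr rfl
          intro q hq
          ring
      _ = ∑ q ∈ s ×ˢ s, ∫ ξ, ((c q.1 * c q.2 : ℝ) : ℂ)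
            * (Complex.exp (((2 * π * ⟪ξ, z q.1 - z q.2⟫ : ℝ) : ℂ) * Complex.I)
              * 𝓕 (fun v : EuclideanSpace ℝ (Fin D) => (Ψ v : ℂ)) ξ) := by
          apply integral_finset_sum
          intro q hq
          exact (hterm _).const_mul _
      _ = ∑ q ∈ s ×ˢ s, ((c q.1 * c q.2 : ℝ) : ℂ) * (Ψ (z q.1 - z q.2) : ℂ) := by
          apply Finset.sum_congr rfl
          intro q hq
          rw [MeasureTheory.integral_const_mul, ← hinv]
      _ = 0 := hs
  -- pass to real parts
  set W : EuclideanSpace ℝ (Fin D) → ℝ :=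
    fun ξ => (𝓕 (fun v : EuclideanSpace ℝ (Fin D) => (Ψ v : ℂ)) ξ).re with hWdef
  have hint1 : Integrable (fun ξ => p ξ * (starRingEnd ℂ) (p ξ)
      * 𝓕 (fun v : EuclideanSpace ℝ (Fin D) => (Ψ v : ℂ)) ξ) := by
    apply hFT.bdd_mul (c := (∑ i ∈ s, |c i|) ^ 2)
    · exact (hpcont.mul (Complex.continuous_conj.comp hpcont)).aestronglyMeasurable
    · refine Filter.Eventually.of_forall fun ξ => ?_
      rw [norm_mul, RCLike.norm_conj, sq]
      have h0 : (0:ℝ) ≤ ∑ i ∈ s, |c i| := Finset.sum_nonneg fun i _ => abs_nonneg _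
      exact mul_le_mul (hpbd ξ) (hpbd ξ) (norm_nonneg _) h0
  have hRe : ∫ ξ, ‖p ξ‖ ^ 2 * W ξ = 0 := by
    have h2 := integral_re hint1
    simp only [RCLike.re_to_complex] at h2
    calc ∫ ξ, ‖p ξ‖ ^ 2 * W ξ
        = ∫ ξ, (p ξ * (starRingEnd ℂ) (p ξ)
            * 𝓕 (fun v : EuclideanSpace ℝ (Fin D) => (Ψ v : ℂ)) ξ).re := by
          apply integral_congr_ae
          filter_upwards with ξ
          rw [Complex.mul_conj, Complex.normSq_eq_norm_sq]
          rw [Complex.mul_re, Complex.ofReal_re, Complex.ofReal_im]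
          ring
      _ = (∫ ξ, p ξ * (starRingEnd ℂ) (p ξ)
            * 𝓕 (fun v : EuclideanSpace ℝ (Fin D) => (Ψ v : ℂ)) ξ).re := h2
      _ = 0 := by rw [hQC2]; rfl
  have hgcont : Continuous (fun ξ => ‖p ξ‖ ^ 2 * W ξ) :=
    ((hpcont.norm.pow 2)).mul (Complex.continuous_re.comp (fourierCont hΨc))
  have hgnn : ∀ ξ, 0 ≤ ‖p ξ‖ ^ 2 * W ξ :=
    fun ξ => mul_nonneg (by positivity) (hΨfour ξ).1.le
  have hWint : Integrable W := by
    have := hFT.re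
    apply this.congr
    filter_upwards with ξ
    simp [RCLike.re_to_complex, hWdef]
  have hgint : Integrable (fun ξ => ‖p ξ‖ ^ 2 * W ξ) := by
    apply hWint.bdd_mul (c := (∑ i ∈ s, |c i|) ^ 2) (hpcont.norm.pow 2).aestronglyMeasurable
    refine Filter.Eventually.of_forall fun ξ => ?_
    have h0 : (0:ℝ) ≤ ∑ i ∈ s, |c i| := Finset.sum_nonneg fun i _ => abs_nonneg _
    rw [Real.norm_eq_abs, Pi.pow_apply, _root_.abs_pow, abs_norm, sq, sq]
    exact mul_le_mul (hpbd ξ) (hpbd ξ) (norm_nonneg _) h0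
  have hae := (integral_eq_zero_iff_of_nonneg hgnn hgint).mp hRe
  have hzero : (fun ξ => ‖p ξ‖ ^ 2 * W ξ) = 0 :=
    (Continuous.ae_eq_iff_eq volume hgcont continuous_const).mp hae
  have hp0 : ∀ ξ, p ξ = 0 := by
    intro ξ
    have h := congrFun hzero ξ
    simp only [Pi.zero_apply] at h
    have hWpos := (hΨfour ξ).1
    have : ‖p ξ‖ ^ 2 = 0 := by
      by_contra hne
      exact hne (by
        rcases mul_eq_zero.mp h with h1 | h2
        · exact h1
        · exact absurd h2 (ne_of_gt hWpos))
    simpa using (pow_eq_zero_iff (n := 2) (by norm_num)).mp this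
  exact charZero s c z hz fun ξ => by simpa [hp] using hp0 ξ
/-- **Embedding kernels are characteristic iff the embedding is injective.**
Let `F : S → ℝ^D` be an embedding of a countably infinite set and
`k(X,Y) = Ψ(F X − F Y)` a translation-invariant embedding kernel, where `Ψ` is
positive, continuous and integrable with an (everywhere real and) strictly positive
Fourier transform.  If `F` is injective, then `k` is characteristic: any two finitely
supported probability distributions `μ, ν` whose difference `π = μ − ν` has vanishing
kernel quadratic form `∑_{X,Y} π(X) π(Y) k(X,Y)` (equivalently, equal kernel mean
embeddings / `MMD_k(μ,ν) = 0`) must coincide.  Conversely, if `F` is not injective,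
then `k` is not characteristic. -/
theorem embedding_kernel_characteristic_iff_injective
    {S : Type*} [Countable S] [Infinite S] {D : ℕ}
    (F : S → EuclideanSpace ℝ (Fin D))
    (Ψ : EuclideanSpace ℝ (Fin D) → ℝ)
    (hΨpos : ∀ z, 0 < Ψ z)
    (hΨcont : Continuous Ψ)
    (hΨint : MeasureTheory.Integrable Ψ)
    (hΨfour : ∀ ξ : EuclideanSpace ℝ (Fin D),
      0 < (𝓕 (fun z => (Ψ z : ℂ)) ξ).re ∧ (𝓕 (fun z => (Ψ z : ℂ)) ξ).im = 0)
    (k : S → S → ℝ)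
    (hk : ∀ X Y : S, k X Y = Ψ (F X - F Y)) :
    (Function.Injective F →
      ∀ μ ν : S →₀ ℝ, (∀ X, 0 ≤ μ X) → (∀ X, 0 ≤ ν X) →
        (μ.sum fun _ a => a) = 1 → (ν.sum fun _ a => a) = 1 →
        ((μ - ν).sum fun X a => (μ - ν).sum fun Y b => a * b * k X Y) = 0 →
        μ = ν) ∧
    (¬ Function.Injective F →
      ∃ μ ν : S →₀ ℝ, (∀ X, 0 ≤ μ X) ∧ (∀ X, 0 ≤ ν X) ∧
        (μ.sum fun _ a => a) = 1 ∧ (ν.sum fun _ a => a) = 1 ∧ μ ≠ ν ∧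
        ((μ - ν).sum fun X a => (μ - ν).sum fun Y b => a * b * k X Y) = 0) := by
  classical
  constructor
  · -- injective ⇒ characteristic
    intro hinj μ ν _ _ _ _ hQ
    set q : S →₀ ℝ := μ - ν with hq
    have hQ' : ∑ X ∈ q.support, ∑ Y ∈ q.support, q X * q Y * Ψ (F X - F Y) = 0 := by
      have : (q.sum fun X a => q.sum fun Y b => a * b * k X Y)
          = ∑ X ∈ q.support, ∑ Y ∈ q.support, q X * q Y * Ψ (F X - F Y) := by
        rw [Finsupp.sum]
        apply Finset.sum_congr rfl
        intro X _
        rw [Finsupp.sum]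
        apply Finset.sum_congr rfl
        intro Y _
        rw [hk]
      rw [← this]
      exact hQ
    have hzero := strictPD Ψ hΨpos hΨcont hΨint hΨfour q.support (fun X => q X) F
      (hinj.injOn) hQ'
    have : q = 0 := by
      ext X
      by_cases hX : X ∈ q.support
      · exact hzero X hX
      · simpa using Finsupp.notMem_support_iff.mp hX
    have := sub_eq_zero.mp (hq ▸ this)
    exact this
  · -- not injective ⇒ not characteristic
    intro hninj
    obtain ⟨X, Y, hFXY, hXY⟩ := Function.not_injective_iff.mp hninj
    refine ⟨Finsupp.single X 1, Finsupp.single Y 1, ?_, ?_, ?_, ?_, ?_, ?_⟩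
    · intro A
      rw [Finsupp.single_apply]
      split <;> norm_num
    · intro A
      rw [Finsupp.single_apply]
      split <;> norm_num
    · rw [Finsupp.sum_single_index rfl]
    · rw [Finsupp.sum_single_index rfl]
    · intro h
      exact hXY ((Finsupp.single_left_inj one_ne_zero).mp h)
    · set q : S →₀ ℝ := Finsupp.single X 1 - Finsupp.single Y 1 with hq
      have hqX : ∀ A, q A = (if X = A then (1:ℝ) else 0) - (if Y = A then (1:ℝ) else 0) := by
        intro A
        rw [hq, Finsupp.sub_apply, Finsupp.single_apply, Finsupp.single_apply]
      have hsupp : q.support ⊆ {X, Y} := by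
        intro A hA
        rw [Finsupp.mem_support_iff, hqX A] at hA
        by_contra hnA
        simp only [Finset.mem_insert, Finset.mem_singleton, not_or] at hnA
        rw [if_neg (fun h => hnA.1 h.symm), if_neg (fun h => hnA.2 h.symm)] at hA
        simp at hA
      have hinner0 : ∀ (A : S) , (q.sum fun Y b => (0:ℝ) * b * k A Y) = 0 := by
        intro A
        rw [Finsupp.sum]
        apply Finset.sum_eq_zero
        intro B _
        ring
      have hkconst : ∀ A ∈ ({X, Y} : Finset S), ∀ B ∈ ({X, Y} : Finset S),
          k A B = Ψ 0 := by
        intro A hA B hB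
        rw [hk]
        congr 1
        simp only [Finset.mem_insert, Finset.mem_singleton] at hA hB
        have hval : ∀ C ∈ ({X, Y} : Finset S), F C = F X := by
          intro C hC
          simp only [Finset.mem_insert, Finset.mem_singleton] at hC
          rcases hC with rfl | rfl
          · rfl
          · exact hFXY.symm
        rw [hval A (by simp [hA]), hval B (by simp [hB]), sub_self]
      rw [Finsupp.sum_of_support_subset q hsupp _ (fun A _ => hinner0 A)]
      have hXY' : X ∉ ({Y} : Finset S) := by simpa using hXY
      rw [show ({X, Y} : Finset S) = insert X {Y} from rfl]
      rw [Finset.sum_insert hXY', Finset.sum_singleton]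
      have hin : ∀ A ∈ ({X, Y} : Finset S),
          (q.sum fun B b => q A * b * k A B)
            = q A * q X * Ψ 0 + q A * q Y * Ψ 0 := by
        intro A hA
        rw [Finsupp.sum_of_support_subset q hsupp _ (fun B _ => by ring)]
        rw [show ({X, Y} : Finset S) = insert X {Y} from rfl]
        rw [Finset.sum_insert hXY', Finset.sum_singleton]
        rw [hkconst A hA X (by simp), hkconst A hA Y (by simp)]
      rw [hin X (by simp), hin Y (by simp)]
      have hqXX : q X = 1 := by
        rw [hqX X, if_pos rfl, if_neg (fun h => hXY h.symm)]
        norm_num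
      have hqYY : q Y = -1 := by
        rw [hqX Y, if_neg (fun h => hXY h), if_pos rfl]
        norm_num
      rw [hqXX, hqYY]
      ring
end

section
/- Let 𝓑 be a finite alphabet with |𝓑| ≥ 2, S the set of finite strings over 𝓑, and D ∈ ℕ, ε > 0. Let {F̃(X)}_{X∈S} be i.i.d. uniform on the closed unit ball of ℝ^D, and define the scaled embedding F(X) = |𝓑|^{(1+ε)|X|/D} F̃(X). Then almost surely, for every N the set {X ∈ S : ‖F(X)‖ ≤ N} is finite; consequently F(S) has no accumulation points almost surely. -/
open MeasureTheory ProbabilityTheory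
open scoped ENNReal

/-- Summability of the Borel–Cantelli bound over all strings. -/
lemma sre_tsum_aux {B : Type*} [Fintype B] (hB : 2 ≤ Fintype.card B)
    {ε : ℝ} (hε : 0 < ε) {C : ℝ} (hC : 0 ≤ C) :
    ∑' X : List B,
      ENNReal.ofReal (C * (Fintype.card B : ℝ) ^ (-((1 + ε) * (X.length : ℝ)))) ≠ ∞ := by
  have hc1 : (1 : ℝ) < Fintype.card B := by exact_mod_cast lt_of_lt_of_le one_lt_two hB
  have hc0 : (0 : ℝ) < Fintype.card B := lt_trans one_pos hc1
  set c : ℝ := (Fintype.card B : ℝ) with hc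
  set f : ℕ → ℝ≥0∞ := fun n => ENNReal.ofReal (C * c ^ (-((1 + ε) * (n : ℝ)))) with hfdef
  have h1 : ∑' X : List B, f X.length
      = ∑' σ : Σ n, Fin n → B, f σ.1 := by
    rw [← Equiv.tsum_eq (List.equivSigmaTuple (α := B)).symm (fun X => f X.length)]
    refine tsum_congr fun σ => ?_
    simp [List.equivSigmaTuple]
  have h2 : ∑' σ : Σ n, Fin n → B, f σ.1
      = ∑' n : ℕ, (Fintype.card B ^ n : ℕ) * f n := by
    refine (ENNReal.tsum_sigma (fun n (_ : Fin n → B) => f n)).trans (tsum_congr fun n => ?_)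
    rw [tsum_fintype]
    simp [Finset.sum_const, Fintype.card_fun, nsmul_eq_mul]
  have hterm : ∀ n : ℕ, (Fintype.card B ^ n : ℕ) * f n
      = ENNReal.ofReal C * (ENNReal.ofReal (c ^ (-ε))) ^ n := by
    intro n
    have hr1 : (c ^ (-ε)) ^ n = c ^ ((-ε) * (n : ℝ)) := by
      rw [← Real.rpow_natCast (c ^ (-ε)) n, ← Real.rpow_mul hc0.le]
    have hr2 : (c : ℝ) ^ n = c ^ (n : ℝ) := by
      rw [Real.rpow_natCast]
    have hreal : ((Fintype.card B ^ n : ℕ) : ℝ) * (C * c ^ (-((1 + ε) * (n : ℝ))))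
        = C * (c ^ (-ε)) ^ n := by
      push_cast
      rw [hr1, hr2, ← mul_assoc, mul_comm ((c:ℝ) ^ ((n:ℝ))) C, mul_assoc,
        ← Real.rpow_add hc0]
      ring_nf
    calc (Fintype.card B ^ n : ℕ) * f n
        = ENNReal.ofReal (((Fintype.card B ^ n : ℕ) : ℝ) * (C * c ^ (-((1 + ε) * (n : ℝ))))) := by
          rw [ENNReal.ofReal_mul (by positivity), ENNReal.ofReal_natCast]
      _ = ENNReal.ofReal (C * (c ^ (-ε)) ^ n) := by rw [hreal]
      _ = ENNReal.ofReal C * (ENNReal.ofReal (c ^ (-ε))) ^ n := by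
          rw [ENNReal.ofReal_mul hC, ENNReal.ofReal_pow (by positivity)]
  have hρ : ENNReal.ofReal (c ^ (-ε)) < 1 := by
    rw [← ENNReal.ofReal_one]
    exact ENNReal.ofReal_lt_ofReal_iff_of_nonneg (by positivity) |>.2
      (Real.rpow_lt_one_of_one_lt_of_neg hc1 (neg_lt_zero.2 hε))
  calc ∑' X : List B, ENNReal.ofReal (C * c ^ (-((1 + ε) * (X.length : ℝ))))
      = ∑' n : ℕ, (Fintype.card B ^ n : ℕ) * f n := by rw [← h2, ← h1]
    _ = ENNReal.ofReal C * ∑' n : ℕ, (ENNReal.ofReal (c ^ (-ε))) ^ n := by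
        rw [← ENNReal.tsum_mul_left]; exact tsum_congr hterm
    _ ≠ ∞ := by
        rw [ENNReal.tsum_geometric]
        exact ENNReal.mul_ne_top ENNReal.ofReal_ne_top
          (ENNReal.inv_ne_top.2 (tsub_pos_of_lt hρ).ne')

/-- Probability that a uniform sample from the unit ball lands in a ball of radius `r`. -/
lemma sre_prob_bound {D : ℕ} {Ω : Type*} [MeasurableSpace Ω] (P : Measure Ω)
    (f : Ω → EuclideanSpace ℝ (Fin D)) (hf : Measurable f)
    (hlaw : P.map f =
      (volume (Metric.closedBall (0 : EuclideanSpace ℝ (Fin D)) 1))⁻¹ •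
        volume.restrict (Metric.closedBall (0 : EuclideanSpace ℝ (Fin D)) 1))
    {r : ℝ} (hr : 0 ≤ r) :
    P {ω | ‖f ω‖ ≤ r} ≤ ENNReal.ofReal (r ^ D) := by
  set v := volume (Metric.closedBall (0 : EuclideanSpace ℝ (Fin D)) 1) with hv
  have hv0 : v ≠ 0 := (Metric.measure_closedBall_pos volume 0 one_pos).ne'
  have hvt : v ≠ ∞ := measure_closedBall_lt_top.ne
  have hset : {ω | ‖f ω‖ ≤ r} = f ⁻¹' Metric.closedBall 0 r := by
    ext ω; simp [mem_closedBall_zero_iff]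
  rw [hset, ← Measure.map_apply hf measurableSet_closedBall, hlaw,
    Measure.smul_apply, smul_eq_mul,
    Measure.restrict_apply measurableSet_closedBall]
  calc v⁻¹ * volume (Metric.closedBall (0 : EuclideanSpace ℝ (Fin D)) r ∩
        Metric.closedBall 0 1)
      ≤ v⁻¹ * volume (Metric.closedBall (0 : EuclideanSpace ℝ (Fin D)) r) := by
        gcongr; exact Set.inter_subset_left
    _ = v⁻¹ * (ENNReal.ofReal (r ^ D) * v) := by
        rw [Measure.addHaar_closedBall' volume 0 hr, finrank_euclideanSpace_fin]
    _ = ENNReal.ofReal (r ^ D) * (v⁻¹ * v) := by ring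
    _ = ENNReal.ofReal (r ^ D) := by rw [ENNReal.inv_mul_cancel hv0 hvt, mul_one]

/-- Two independent absolutely continuous vectors are a.s. not proportional with
given coefficients. -/
lemma sre_ne_aux {D : ℕ} (hD : 0 < D) {Ω : Type*} [MeasurableSpace Ω] (P : Measure Ω)
    [IsProbabilityMeasure P]
    (f g : Ω → EuclideanSpace ℝ (Fin D)) (hf : Measurable f) (hg : Measurable g)
    (hfg : IndepFun f g P)
    (hlawg : P.map g =
      (volume (Metric.closedBall (0 : EuclideanSpace ℝ (Fin D)) 1))⁻¹ •
        volume.restrict (Metric.closedBall (0 : EuclideanSpace ℝ (Fin D)) 1))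
    (a b : ℝ) (hb : b ≠ 0) :
    P {ω | a • f ω = b • g ω} = 0 := by
  haveI : Nonempty (Fin D) := ⟨⟨0, hD⟩⟩
  haveI : Nontrivial (EuclideanSpace ℝ (Fin D)) := inferInstance
  set S : Set (EuclideanSpace ℝ (Fin D) × EuclideanSpace ℝ (Fin D)) :=
    {p | a • p.1 = b • p.2} with hS
  have hSm : MeasurableSet S := by
    have : S = (fun p : EuclideanSpace ℝ (Fin D) × EuclideanSpace ℝ (Fin D) =>
        a • p.1 - b • p.2) ⁻¹' {0} := by
      ext p; simp [hS, sub_eq_zero]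
    rw [this]
    exact ((continuous_fst.const_smul a).sub (continuous_snd.const_smul b)).measurable
      (measurableSet_singleton 0)
  have hmap := (indepFun_iff_map_prod_eq_prod_map_map hf.aemeasurable hg.aemeasurable).1 hfg
  have hprobg : IsProbabilityMeasure (P.map g) := Measure.isProbabilityMeasure_map hg.aemeasurable
  have hsingleton : ∀ z : EuclideanSpace ℝ (Fin D), P.map g {z} = 0 := by
    intro z
    rw [hlawg, Measure.smul_apply, smul_eq_mul,
      Measure.restrict_apply (measurableSet_singleton z)]
    have : volume ({z} ∩ Metric.closedBall (0 : EuclideanSpace ℝ (Fin D)) 1) = 0 :=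
      measure_mono_null Set.inter_subset_left (measure_singleton z)
    rw [this, mul_zero]
  have : P {ω | a • f ω = b • g ω} = ((P.map f).prod (P.map g)) S := by
    rw [← hmap, Measure.map_apply (hf.prodMk hg) hSm]
    rfl
  rw [this, Measure.prod_apply hSm]
  have hzero : ∀ x : EuclideanSpace ℝ (Fin D),
      (P.map g) (Prod.mk x ⁻¹' S) = 0 := by
    intro x
    refine measure_mono_null (t := {b⁻¹ • (a • x)}) ?_ ?_
    · intro y hy
      have : b • y = a • x := (hy : a • x = b • y).symm
      simp [← this, inv_smul_smul₀ hb]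
    · exact hsingleton _
  rw [lintegral_congr hzero, lintegral_zero]

/-- **Scaled random embeddings have no accumulation points.**
Let `𝓑` be a finite alphabet with `|𝓑| ≥ 2`, `S = List 𝓑` the set of finite strings,
`D ≥ 1`, `ε > 0`, and let `{F̃ X}_{X ∈ S}` be i.i.d. uniform on the closed unit ball of
`ℝ^D`.  Define the scaled embedding `F X = |𝓑|^{(1+ε)|X|/D} • F̃ X`.  Then almost
surely, for every `N` the set `{X : ‖F X‖ ≤ N}` is finite, and consequently the image
of `F` has no accumulation points: no `F X₀` lies in the closure of `F '' (S \ {X₀})`. -/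
theorem scaled_random_embedding_no_accumulation
    {B : Type*} [Fintype B] [DecidableEq B] (hB : 2 ≤ Fintype.card B)
    {D : ℕ} (hD : 0 < D) (ε : ℝ) (hε : 0 < ε)
    {Ω : Type*} [MeasurableSpace Ω] (P : Measure Ω) [IsProbabilityMeasure P]
    (Ft : List B → Ω → EuclideanSpace ℝ (Fin D))
    (hmeas : ∀ X, Measurable (Ft X))
    (hindep : iIndepFun Ft P)
    (hlaw : ∀ X, P.map (Ft X) =
      (volume (Metric.closedBall (0 : EuclideanSpace ℝ (Fin D)) 1))⁻¹ •
        volume.restrict (Metric.closedBall (0 : EuclideanSpace ℝ (Fin D)) 1))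
    (F : List B → Ω → EuclideanSpace ℝ (Fin D))
    (hF : ∀ (X : List B) (ω : Ω),
      F X ω = ((Fintype.card B : ℝ) ^ ((1 + ε) * (X.length : ℝ) / (D : ℝ))) • Ft X ω) :
    ∀ᵐ ω ∂P,
      (∀ N : ℕ, {X : List B | ‖F X ω‖ ≤ (N : ℝ)}.Finite) ∧
      ∀ X₀ : List B, F X₀ ω ∉ closure ((fun X => F X ω) '' {X : List B | X ≠ X₀}) := by
  have hc1 : (1 : ℝ) < Fintype.card B := by exact_mod_cast lt_of_lt_of_le one_lt_two hB
  have hc0 : (0 : ℝ) < Fintype.card B := lt_trans one_pos hc1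
  set c : ℝ := (Fintype.card B : ℝ) with hcdef
  -- Part 1: a.s. finiteness for each N
  have hfin : ∀ N : ℕ, ∀ᵐ ω ∂P, {X : List B | ‖F X ω‖ ≤ (N : ℝ)}.Finite := by
    intro N
    have key : ∀ X : List B, P {ω | ‖F X ω‖ ≤ (N : ℝ)} ≤
        ENNReal.ofReal ((N : ℝ) ^ D * c ^ (-((1 + ε) * (X.length : ℝ)))) := by
      intro X
      set L : ℝ := (X.length : ℝ) with hL
      set a : ℝ := c ^ ((1 + ε) * L / (D : ℝ)) with ha
      have hapos : 0 < a := Real.rpow_pos_of_pos hc0 _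
      have hset : {ω | ‖F X ω‖ ≤ (N : ℝ)} = {ω | ‖Ft X ω‖ ≤ (N : ℝ) / a} := by
        ext ω
        rw [Set.mem_setOf_eq, Set.mem_setOf_eq, hF, norm_smul, Real.norm_eq_abs,
          abs_of_pos hapos, le_div_iff₀ hapos, mul_comm]
      have haD : a ^ D = c ^ ((1 + ε) * L) := by
        rw [ha, ← Real.rpow_natCast (c ^ ((1 + ε) * L / (D : ℝ))) D,
          ← Real.rpow_mul hc0.le, div_mul_cancel₀ _ (by exact_mod_cast hD.ne')]
      have hval : ((N : ℝ) / a) ^ D = (N : ℝ) ^ D * c ^ (-((1 + ε) * L)) := by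
        rw [div_pow, haD, Real.rpow_neg hc0.le, div_eq_mul_inv]
      rw [hset]
      calc P {ω | ‖Ft X ω‖ ≤ (N : ℝ) / a}
          ≤ ENNReal.ofReal (((N : ℝ) / a) ^ D) :=
            sre_prob_bound P (Ft X) (hmeas X) (hlaw X)
              (div_nonneg (Nat.cast_nonneg N) hapos.le)
        _ = ENNReal.ofReal ((N : ℝ) ^ D * c ^ (-((1 + ε) * L))) := by rw [hval]
    have hsum : ∑' X : List B, P {ω | ‖F X ω‖ ≤ (N : ℝ)} ≠ ∞ :=
      ne_top_of_le_ne_top (sre_tsum_aux hB hε (pow_nonneg (Nat.cast_nonneg N) D))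
        (ENNReal.tsum_le_tsum key)
    exact ae_finite_setOf_mem hsum
  -- Part 2: a.s. injectivity
  have hinj : ∀ᵐ ω ∂P, ∀ X Y : List B, X ≠ Y → F X ω ≠ F Y ω := by
    rw [ae_all_iff]
    intro X
    rw [ae_all_iff]
    intro Y
    by_cases hXY : X = Y
    · subst hXY
      filter_upwards with ω h
      exact absurd rfl h
    · have h0 : P {ω | F X ω = F Y ω} = 0 := by
        have : {ω | F X ω = F Y ω} =
            {ω | (c ^ ((1 + ε) * (X.length : ℝ) / (D : ℝ))) • Ft X ω =
              (c ^ ((1 + ε) * (Y.length : ℝ) / (D : ℝ))) • Ft Y ω} := by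
          ext ω; rw [Set.mem_setOf_eq, Set.mem_setOf_eq, hF, hF]
        rw [this]
        exact sre_ne_aux hD P (Ft X) (Ft Y) (hmeas X) (hmeas Y)
          (hindep.indepFun hXY) (hlaw Y) _ _
          (Real.rpow_pos_of_pos hc0 _).ne'
      have : ∀ᵐ ω ∂P, F X ω ≠ F Y ω := by
        rw [ae_iff]
        simpa using h0
      filter_upwards [this] with ω hω _
      exact hω
  -- combine
  filter_upwards [ae_all_iff.2 hfin, hinj] with ω h1 h2
  refine ⟨h1, ?_⟩
  intro X₀ hmem
  obtain ⟨N, hN⟩ := exists_nat_ge (‖F X₀ ω‖ + 1)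
  set A₁ : Set (EuclideanSpace ℝ (Fin D)) :=
    (fun X => F X ω) '' ({X | X ≠ X₀} ∩ {X | ‖F X ω‖ ≤ (N : ℝ)}) with hA₁
  have hA₁fin : A₁.Finite :=
    ((h1 N).subset Set.inter_subset_right).image _
  have hsub : (fun X => F X ω) '' {X : List B | X ≠ X₀}
      ⊆ A₁ ∪ {z | (N : ℝ) < ‖z‖} := by
    rintro _ ⟨X, hX, rfl⟩
    by_cases h : ‖F X ω‖ ≤ (N : ℝ)
    · exact Or.inl ⟨X, ⟨hX, h⟩, rfl⟩
    · exact Or.inr (not_le.1 h)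
  have hcl := closure_mono hsub hmem
  rw [closure_union] at hcl
  rcases hcl with h | h
  · rw [hA₁fin.isClosed.closure_eq] at h
    obtain ⟨X, ⟨hX, -⟩, hEq⟩ := h
    exact h2 X X₀ hX hEq
  · have hcl2 : closure {z : EuclideanSpace ℝ (Fin D) | (N : ℝ) < ‖z‖}
        ⊆ {z | (N : ℝ) ≤ ‖z‖} :=
      closure_minimal (fun z (hz : (N : ℝ) < ‖z‖) => hz.le)
        (isClosed_le continuous_const continuous_norm)
    have hge : (N : ℝ) ≤ ‖F X₀ ω‖ := hcl2 h
    linarith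
end
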